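/- arXiv:1410.1318 — 3 statements merged into one kernel-verified Lean document; each statement's English description precedes it below -/
import Mathlib

section
/- Let c be a rational number with 1/3 < c ≤ 2/3. Then for infinitely many values of n, there exists a Boolean function f : F_2^n → F_2 with exactly cn crucial terms, T^{≥3}(f) = cn, such that every 0-restriction f' of f on n' variables with n' > n − ⌈(3c−1)n/5⌉ satisfies T^{≥3}(f') > n'/3. -/
open Finset

/-- Evaluation of the multilinear polynomial over `F₂` whose set of monomials is `M`. -/
def anfEval {n : ℕ} (M : Finset (Finset (Fin n))) (x : Fin n → ZMod 2) : ZMod 2 :=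
  ∑ S ∈ M, ∏ j ∈ S, x j

/-- `M` is the algebraic normal form (set of monomials) of the Boolean function `f`. -/
def IsANF {n : ℕ} (f : (Fin n → ZMod 2) → ZMod 2) (M : Finset (Finset (Fin n))) : Prop :=
  ∀ x, f x = anfEval M x

/-- The number of crucial terms (monomials of degree at least 3) of an ANF. -/
def crucialCount {n : ℕ} (M : Finset (Finset (Fin n))) : ℕ :=
  (M.filter fun S => 3 ≤ S.card).card

/-- The `0`-restriction of `f` keeping exactly the variables in `K` (all other
variables are set to the constant `0`). It is a Boolean function on `K.card` variables. -/
def zeroRestrict {n : ℕ} (f : (Fin n → ZMod 2) → ZMod 2) (K : Finset (Fin n)) :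
    (Fin n → ZMod 2) → ZMod 2 :=
  fun x => f fun i => if i ∈ K then x i else 0

def monoN (m i : ℕ) : Finset ℕ := {i, if i + 1 = m then 0 else i + 1, m + i / 2}

/-- The `i`-th monomial as a set of elements of `Fin n`. -/
def monoF (n m i : ℕ) : Finset (Fin n) :=
  ((monoN m i).filter (· < n)).attachFin (fun _ ha => (Finset.mem_filter.mp ha).2)

lemma mem_monoF {n m i : ℕ} {x : Fin n} : x ∈ monoF n m i ↔ x.val ∈ monoN m i := by
  simp [monoF, Finset.mem_attachFin, x.isLt]

lemma mem_monoN' {m i v : ℕ} :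
    v ∈ monoN m i ↔ v = i ∨ v = (if i + 1 = m then 0 else i + 1) ∨ v = m + i / 2 := by
  simp [monoN]

lemma monoN_lt {m n i v : ℕ} (hm : 3 ≤ m) (h3 : 3 * m ≤ 2 * n) (hi : i < m)
    (hv : v ∈ monoN m i) : v < n := by
  rw [mem_monoN'] at hv
  split_ifs at hv <;> omega

lemma monoF_filter_eq {n m i : ℕ} (hm : 3 ≤ m) (h3 : 3 * m ≤ 2 * n) (hi : i < m) :
    (monoN m i).filter (· < n) = monoN m i :=
  Finset.filter_true_of_mem fun a ha => monoN_lt hm h3 hi ha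

lemma monoF_card {n m i : ℕ} (hm : 3 ≤ m) (h3 : 3 * m ≤ 2 * n) (hi : i < m) :
    (monoF n m i).card = 3 := by
  rw [monoF, Finset.card_attachFin, monoF_filter_eq hm h3 hi]
  apply Finset.card_eq_three.mpr
  refine ⟨i, if i + 1 = m then 0 else i + 1, m + i / 2, ?_, ?_, ?_, rfl⟩
  · split_ifs <;> omega
  · omega
  · split_ifs <;> omega

lemma monoN_inj {m i j : ℕ} (hm : 3 ≤ m) (hi : i < m) (hj : j < m)
    (h : monoN m i = monoN m j) : i = j := by
  have h1 : i ∈ monoN m j := h ▸ (mem_monoN'.mpr (Or.inl rfl))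
  have h2 : j ∈ monoN m i := h.symm ▸ (mem_monoN'.mpr (Or.inl rfl))
  have h3 : m + i / 2 ∈ monoN m j := h ▸ (mem_monoN'.mpr (Or.inr (Or.inr rfl)))
  rw [mem_monoN'] at h1 h2 h3
  split_ifs at h1 h2 h3 <;> omega

lemma monoF_inj {n m i j : ℕ} (hm : 3 ≤ m) (h3 : 3 * m ≤ 2 * n) (hi : i < m) (hj : j < m)
    (h : monoF n m i = monoF n m j) : i = j := by
  apply monoN_inj hm hi hj
  ext a
  by_cases ha : a < n
  · have := Finset.ext_iff.mp h ⟨a, ha⟩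
    rw [mem_monoF, mem_monoF] at this
    exact this
  · constructor <;> intro hmem <;>
      [exact absurd (monoN_lt hm h3 hi hmem) ha; exact absurd (monoN_lt hm h3 hj hmem) ha]

lemma monoN_degree {m v : ℕ} (hm : 3 ≤ m) :
    ((Finset.range m).filter (fun i => v ∈ monoN m i)).card ≤ 2 := by
  classical
  have hsub : ((Finset.range m).filter (fun i => v ∈ monoN m i)) ⊆
      (if v < m then ({v, if v = 0 then m - 1 else v - 1} : Finset ℕ)
       else {2 * (v - m), 2 * (v - m) + 1}) := by
    intro i hi
    rw [Finset.mem_filter, Finset.mem_range, mem_monoN'] at hi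
    obtain ⟨him, hv⟩ := hi
    split_ifs with h1 <;> simp only [Finset.mem_insert, Finset.mem_singleton] <;>
      split_ifs at hv ⊢ <;> omega
  calc ((Finset.range m).filter (fun i => v ∈ monoN m i)).card
      ≤ _ := Finset.card_le_card hsub
    _ ≤ 2 := by split_ifs <;> apply le_trans (Finset.card_insert_le _ _) <;> simp

lemma isANF_zeroRestrict {n : ℕ} (M : Finset (Finset (Fin n))) (K : Finset (Fin n)) :
    IsANF (zeroRestrict (anfEval M) K) (M.filter (· ⊆ K)) := by
  intro x
  unfold zeroRestrict anfEval
  rw [Finset.sum_filter]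
  refine Finset.sum_congr rfl fun S _ => ?_
  by_cases h : S ⊆ K
  · rw [if_pos h]
    exact Finset.prod_congr rfl fun j hj => if_pos (h hj)
  · rw [if_neg h]
    obtain ⟨j, hjS, hjK⟩ := Finset.not_subset.mp h
    exact Finset.prod_eq_zero hjS (if_neg hjK)

/-- Counting lemma: the number of "bad" monomial indices (not contained in `K`) is at most
twice the number of removed variables. -/
lemma bad_count {n m : ℕ} (hm : 3 ≤ m) (h3 : 3 * m ≤ 2 * n) (K : Finset (Fin n)) :
    ((Finset.range m).filter (fun i => ¬ monoF n m i ⊆ K)).card ≤ 2 * (n - K.card) := by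
  classical
  set Kv : Finset ℕ := K.image Fin.val with hKv
  have hsub : ((Finset.range m).filter (fun i => ¬ monoF n m i ⊆ K)) ⊆
      (Finset.range n \ Kv).biUnion (fun v => (Finset.range m).filter (fun i => v ∈ monoN m i)) := by
    intro i hi
    rw [Finset.mem_filter, Finset.mem_range] at hi
    obtain ⟨him, hbad⟩ := hi
    obtain ⟨x, hxS, hxK⟩ := Finset.not_subset.mp hbad
    rw [Finset.mem_biUnion]
    refine ⟨x.val, ?_, ?_⟩
    · rw [Finset.mem_sdiff, Finset.mem_range]
      refine ⟨x.isLt, fun hc => hxK ?_⟩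
      rw [hKv, Finset.mem_image] at hc
      obtain ⟨y, hy, hyv⟩ := hc
      rwa [show y = x from Fin.val_injective hyv] at hy
    · rw [Finset.mem_filter, Finset.mem_range]
      exact ⟨him, mem_monoF.mp hxS⟩
  calc ((Finset.range m).filter (fun i => ¬ monoF n m i ⊆ K)).card
      ≤ _ := Finset.card_le_card hsub
    _ ≤ ∑ v ∈ Finset.range n \ Kv, ((Finset.range m).filter (fun i => v ∈ monoN m i)).card :=
        Finset.card_biUnion_le
    _ ≤ ∑ _v ∈ Finset.range n \ Kv, 2 := Finset.sum_le_sum fun v _ => monoN_degree hm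
    _ = 2 * (n - K.card) := by
        rw [Finset.sum_const, smul_eq_mul, Finset.card_sdiff_of_subset]
        · rw [Finset.card_range, hKv, Finset.card_image_of_injective _ Fin.val_injective]
          ring
        · intro v hv
          rw [hKv, Finset.mem_image] at hv
          obtain ⟨y, _, hyv⟩ := hv
          rw [Finset.mem_range, ← hyv]
          exact y.isLt

lemma anfEval_indicator {n : ℕ} (M : Finset (Finset (Fin n))) (S : Finset (Fin n)) :
    anfEval M (fun j => if j ∈ S then 1 else 0) = ((M.filter (· ⊆ S)).card : ZMod 2) := by
  unfold anfEval
  rw [← Finset.sum_boole]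
  refine Finset.sum_congr rfl fun T _ => ?_
  by_cases h : T ⊆ S
  · rw [if_pos h]
    exact Finset.prod_eq_one fun j hj => if_pos (h hj)
  · rw [if_neg h]
    obtain ⟨j, hjT, hjS⟩ := Finset.not_subset.mp h
    exact Finset.prod_eq_zero hjT (if_neg hjS)

lemma anf_unique {n : ℕ} {M M' : Finset (Finset (Fin n))}
    (h : ∀ x, anfEval M x = anfEval M' x) : M = M' := by
  ext S
  induction S using Finset.strongInduction with
  | _ S ih =>
    have key := h (fun j => if j ∈ S then 1 else 0)
    rw [anfEval_indicator, anfEval_indicator] at key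
    have hsplit : ∀ (A : Finset (Finset (Fin n))),
        (A.filter (· ⊆ S)).card = (A.filter (· ⊂ S)).card + (A.filter (· = S)).card := by
      intro A
      rw [← Finset.card_union_of_disjoint]
      · congr 1
        rw [← Finset.filter_or]
        apply Finset.filter_congr
        intro T _
        constructor
        · intro hTS
          rcases eq_or_lt_of_le (Finset.le_iff_subset.mpr hTS) with h | h
          · exact Or.inr h
          · exact Or.inl h
        · rintro (h | h)
          · exact h.subset
          · exact h.le
      · rw [Finset.disjoint_filter]
        intro T _ h1 h2
        rw [h2] at h1
        exact lt_irrefl S h1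
    rw [hsplit, hsplit] at key
    have hlt : M.filter (· ⊂ S) = M'.filter (· ⊂ S) := by
      ext T
      simp only [Finset.mem_filter]
      constructor
      · rintro ⟨h1, h2⟩; exact ⟨(ih T h2).mp h1, h2⟩
      · rintro ⟨h1, h2⟩; exact ⟨(ih T h2).mpr h1, h2⟩
    rw [hlt] at key
    have heq : ((M.filter (· = S)).card : ZMod 2) = ((M'.filter (· = S)).card : ZMod 2) := by
      push_cast at key ⊢
      linear_combination key
    rw [Finset.filter_eq', Finset.filter_eq'] at heq
    by_cases h1 : S ∈ M <;> by_cases h2 : S ∈ M' <;>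
      simp [h1, h2] at heq ⊢


/-- for rational `1/3 < c ≤ 2/3`, for infinitely many `n` there is a Boolean
function on `n` variables with exactly `c·n` crucial terms such that every `0`-restriction
on `n' > n - ⌈(3c-1)n/5⌉` variables has more than `n'/3` crucial terms. -/
theorem stmt2 (c : ℚ) (hc1 : 1 / 3 < c) (hc2 : c ≤ 2 / 3) :
    ∀ N : ℕ, ∃ n ≥ N, ∃ (f : (Fin n → ZMod 2) → ZMod 2) (M : Finset (Finset (Fin n))),
      IsANF f M ∧ (crucialCount M : ℚ) = c * n ∧
      ∀ K : Finset (Fin n), (n : ℤ) - ⌈(3 * c - 1) * n / 5⌉ < (K.card : ℤ) →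
        ∀ M' : Finset (Finset (Fin n)), IsANF (zeroRestrict f K) M' →
          (K.card : ℚ) / 3 < (crucialCount M' : ℚ) := by
  classical
  intro N
  -- parameters
  have hcpos : 0 < c := lt_trans (by norm_num) hc1
  set p : ℕ := c.num.toNat with hp
  set q : ℕ := c.den with hq
  have hp1 : 1 ≤ p := by
    have := Rat.num_pos.mpr hcpos
    omega
  have hq1 : 1 ≤ q := c.pos
  set k : ℕ := max N 2 with hk
  set n : ℕ := 2 * q * k with hn
  set m : ℕ := 2 * p * k with hmdef
  have hk2 : 2 ≤ k := le_max_right _ _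
  have hnN : N ≤ n := by
    calc N ≤ k := le_max_left _ _
    _ ≤ 2 * q * k := by nlinarith
  have hpk : 2 ≤ p * k := by
    calc 2 = 1 * 2 := rfl
    _ ≤ p * k := Nat.mul_le_mul hp1 hk2
  have hmdef2 : m = 2 * (p * k) := by rw [hmdef]; ring
  have hm3 : 3 ≤ m := by omega
  have hpq : (p : ℚ) = c * q := by
    have h1 : ((p : ℤ) : ℚ) = (c.num : ℚ) := by
      rw [hp]
      exact_mod_cast congrArg (fun z : ℤ => (z : ℚ))
        (Int.toNat_of_nonneg (le_of_lt (Rat.num_pos.mpr hcpos)))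
    have h2 : c * (c.den : ℚ) = (c.num : ℚ) := Rat.mul_den_eq_num c
    rw [hq, h2, ← h1]
    push_cast
    ring
  have hmn : (m : ℚ) = c * n := by
    rw [hmdef, hn]
    push_cast
    rw [hpq]
    ring
  have h3m : 3 * m ≤ 2 * n := by
    have h1 : (3 * m : ℚ) ≤ 2 * n := by
      rw [hmn]
      have hn0 : (0:ℚ) ≤ (n:ℚ) := Nat.cast_nonneg n
      nlinarith
    exact_mod_cast h1
  -- the function
  set M : Finset (Finset (Fin n)) := (Finset.range m).image (fun i => monoF n m i) with hM
  have hMmem : ∀ S ∈ M, S.card = 3 := by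
    intro S hS
    rw [hM, Finset.mem_image] at hS
    obtain ⟨i, hi, rfl⟩ := hS
    exact monoF_card hm3 h3m (Finset.mem_range.mp hi)
  have hinjOn : Set.InjOn (fun i => monoF n m i) (Finset.range m) := by
    intro i hi j hj hij
    exact monoF_inj hm3 h3m (Finset.mem_range.mp (Finset.mem_coe.mp hi))
      (Finset.mem_range.mp (Finset.mem_coe.mp hj)) hij
  have hMcard : M.card = m := by
    rw [hM, Finset.card_image_of_injOn hinjOn, Finset.card_range]
  refine ⟨n, hnN, anfEval M, M, fun x => rfl, ?_, ?_⟩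
  · -- crucialCount M = m
    have : crucialCount M = m := by
      rw [crucialCount, Finset.filter_true_of_mem (fun S hS => (hMmem S hS).symm ▸ le_refl 3),
        hMcard]
    rw [this, hmn]
  · intro K hK M' hM'
    -- identify M'
    have hMK : M' = M.filter (· ⊆ K) := by
      apply anf_unique
      intro x
      rw [← hM' x, isANF_zeroRestrict M K x]
    -- crucialCount M' = number of good indices
    set good := (Finset.range m).filter (fun i => monoF n m i ⊆ K) with hgood
    have hcc : crucialCount M' = good.card := by
      rw [hMK, crucialCount]
      rw [Finset.filter_true_of_mem
        (fun S hS => (hMmem S (Finset.mem_filter.mp hS).1).symm ▸ le_refl 3)]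
      rw [hM, Finset.filter_image]
      rw [Finset.card_image_of_injOn (hinjOn.mono (by
        intro i hi
        exact Finset.mem_coe.mpr (Finset.filter_subset _ _ (Finset.mem_coe.mp hi))))]
    have hsplit : good.card + ((Finset.range m).filter (fun i => ¬ monoF n m i ⊆ K)).card
        = m := by
      rw [hgood, Finset.card_filter_add_card_filter_not, Finset.card_range]
    have hbad := bad_count hm3 h3m K
    -- arithmetic
    have hKn : K.card ≤ n := by
      have := Finset.card_le_univ K
      simpa using this
    have hr : ((n - K.card : ℕ) : ℚ) < (3 * c - 1) * n / 5 := by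
      have h1 : ((n - K.card : ℕ) : ℤ) < ⌈(3 * c - 1) * n / 5⌉ := by
        push_cast [hKn]
        omega
      have := Int.lt_ceil.mp h1
      exact_mod_cast this
    have e1 : (good.card : ℚ) + ((Finset.range m).filter (fun i => ¬ monoF n m i ⊆ K)).card
        = m := by exact_mod_cast congrArg (Nat.cast : ℕ → ℚ) hsplit
    have e2 : (((Finset.range m).filter (fun i => ¬ monoF n m i ⊆ K)).card : ℚ)
        ≤ 2 * ((n - K.card : ℕ) : ℚ) := by exact_mod_cast hbad
    have e3 : ((n - K.card : ℕ) : ℚ) = (n : ℚ) - K.card := by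
      push_cast [hKn]; ring
    rw [hcc]
    linarith [hmn]
end

section
/- Let 0 < ε < 2 and let f : F_2^n → F_2 have algebraic thickness T(f) ≤ n^{3−ε}. Then there exists an affine subspace of F_2^n of dimension at least (4/15)·√((2/3)·n^ε) − 3 on which f is constant. -/
open Finset

variable {n : ℕ}

lemma affine_add (A : (Fin n → ZMod 2) ≃ᵃ[ZMod 2] (Fin n → ZMod 2)) (v w : Fin n → ZMod 2) :
    A (v + w) = A v + A.linear w := by
  have h := AffineMap.map_vadd (A : (Fin n → ZMod 2) →ᵃ[ZMod 2] (Fin n → ZMod 2)) v w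
  simp only [vadd_eq_add, AffineEquiv.coe_coe, AffineEquiv.coe_linear] at h
  rw [add_comm v w, h, add_comm]; rfl


/-- Semantic degree bound via discrete derivatives. -/
def DegLe : ℕ → ((Fin n → ZMod 2) → ZMod 2) → Prop
  | 0, h => ∀ x y, h x = h y
  | (k+1), h => ∀ a, DegLe k (fun x => h (x + a) + h x)

lemma DegLe.congr {k : ℕ} {h h' : (Fin n → ZMod 2) → ZMod 2} (hh : DegLe k h)
    (e : ∀ x, h x = h' x) : DegLe k h' := by
  induction k generalizing h h' with
  | zero => intro x y; rw [← e, ← e]; exact hh x y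
  | succ k ih => intro a; exact ih (hh a) (fun x => by simp only [e])

lemma DegLe.add {k : ℕ} {h g : (Fin n → ZMod 2) → ZMod 2} (hh : DegLe k h) (hg : DegLe k g) :
    DegLe k (fun x => h x + g x) := by
  induction k generalizing h g with
  | zero => intro x y; show h x + g x = h y + g y; rw [hh x y, hg x y]
  | succ k ih =>
    intro a
    exact ((ih (hh a) (hg a)).congr (fun x => by ring))

lemma DegLe.const (k : ℕ) (c : ZMod 2) : DegLe k (fun _ : Fin n → ZMod 2 => c) := by
  induction k with
  | zero => intro x y; rfl
  | succ k ih => intro a; exact ih.add ih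

lemma DegLe.sum {k : ℕ} {ι : Type*} (s : Finset ι) (F : ι → (Fin n → ZMod 2) → ZMod 2)
    (hF : ∀ i ∈ s, DegLe k (F i)) : DegLe k (fun x => ∑ i ∈ s, F i x) := by
  classical
  induction s using Finset.induction_on with
  | empty => exact (DegLe.const k 0).congr (fun x => by simp)
  | @insert a s ha ih =>
    have := (hF a (Finset.mem_insert_self a s)).add (ih (fun i hi => hF i (Finset.mem_insert_of_mem hi)))
    exact this.congr (fun x => by rw [Finset.sum_insert ha])

lemma DegLe.smul {k : ℕ} {h : (Fin n → ZMod 2) → ZMod 2} (hh : DegLe k h) (c : ZMod 2) :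
    DegLe k (fun x => c * h x) := by
  have hc : c = 0 ∨ c = 1 := by
    revert c; decide
  rcases hc with rfl | rfl
  · exact (DegLe.const k 0).congr (fun x => by ring)
  · exact hh.congr (fun x => by ring)

lemma DegLe.mono {k l : ℕ} {h : (Fin n → ZMod 2) → ZMod 2} (hh : DegLe k h) (hkl : k ≤ l) :
    DegLe l h := by
  induction l generalizing k h with
  | zero => rwa [Nat.le_zero.mp hkl] at hh
  | succ l ih =>
    rcases Nat.lt_or_ge k (l+1) with hk | hk
    · -- k ≤ l
      have hkl' : k ≤ l := Nat.lt_succ_iff.mp hk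
      -- show DegLe (l+1) h from DegLe l h
      have hl : DegLe l h := ih hh hkl'
      -- need: ∀ a, DegLe l (Δ_a h).
      intro a
      -- claim: DegLe l h → DegLe l (Δ_a h)
      clear hh hkl hk hkl' ih
      induction l generalizing h with
      | zero =>
        intro x y
        show h (x + a) + h x = h (y + a) + h y
        rw [hl x (y+a), hl (x+a) (y+a), hl y (y+a)]
      | succ l ih2 =>
        intro b
        have : DegLe l fun x => (fun x => h (x + b) + h x) (x + a) + (fun x => h (x + b) + h x) x :=
          ih2 (hl b)
        exact this.congr (fun x => by
          show h (x + a + b) + h (x + a) + (h (x + b) + h x)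
              = h (x + b + a) + h (x + b) + (h (x + a) + h x)
          rw [add_right_comm x a b]; ring)
    · have : k = l + 1 := le_antisymm hkl hk
      rwa [this] at hh

lemma degLe_monomial (S : Finset (Fin n)) : DegLe S.card (fun x => ∏ j ∈ S, x j) := by
  classical
  induction S using Finset.strongInduction with
  | _ S ih =>
  rcases Nat.eq_zero_or_pos S.card with h0 | hpos
  · rw [h0]
    intro x y
    rw [Finset.card_eq_zero.mp h0]; simp
  · obtain ⟨c, hc⟩ : ∃ c, S.card = c + 1 := ⟨S.card - 1, (Nat.succ_pred_eq_of_pos hpos).symm⟩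
    rw [hc]
    intro a
    have expand : ∀ x : Fin n → ZMod 2,
        (∏ j ∈ S, (x + a) j) + ∏ j ∈ S, x j
        = ∑ T ∈ S.powerset.erase S, (∏ j ∈ S \ T, a j) * ∏ j ∈ T, x j := by
      intro x
      have h1 : (∏ j ∈ S, (x + a) j) = ∑ T ∈ S.powerset, (∏ j ∈ T, x j) * ∏ j ∈ S \ T, a j := by
        simpa using Finset.prod_add (fun j => x j) (fun j => a j) S
      rw [h1, ← Finset.sum_erase_add _ _ (Finset.mem_powerset.mpr (le_refl S))]
      simp only [Finset.sdiff_self, Finset.prod_empty, mul_one]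
      have hz : ∀ b c : ZMod 2, c + b + b = c := by decide
      rw [hz]
      exact Finset.sum_congr rfl (fun T _ => mul_comm _ _)
    have : DegLe c (fun x => ∑ T ∈ S.powerset.erase S, (∏ j ∈ S \ T, a j) * ∏ j ∈ T, x j) := by
      apply DegLe.sum
      intro T hT
      have hTS : T ⊆ S := Finset.mem_powerset.mp (Finset.mem_of_mem_erase hT)
      have hTne : T ≠ S := Finset.ne_of_mem_erase hT
      have hTlt : T ⊂ S := ssubset_of_ne_of_subset hTne hTS
      have : DegLe T.card (fun x => ∏ j ∈ T, x j) := ih T hTlt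
      have hcard : T.card ≤ c := by
        have := Finset.card_lt_card hTlt
        omega
      exact (this.mono hcard).smul _
    exact this.congr (fun x => (expand x).symm)

lemma z2 (t : ZMod 2) : t = 0 ∨ t = 1 := by revert t; decide

lemma zadd_self (a : ZMod 2) : a + a = 0 := by revert a; decide

lemma zcancel (a b : ZMod 2) : a = b + (a + b) := by revert a b; decide

/-- Zero out the coordinates outside `V`. -/
def mask (V : Finset (Fin n)) (x : Fin n → ZMod 2) : Fin n → ZMod 2 :=
  fun i => if i ∈ V then x i else 0

lemma mask_add (V : Finset (Fin n)) (x y : Fin n → ZMod 2) :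
    mask V (x + y) = mask V x + mask V y := by
  funext i; by_cases h : i ∈ V <;> simp [mask, h]

lemma mask_eq_self {V : Finset (Fin n)} {x : Fin n → ZMod 2} (hx : ∀ i ∉ V, x i = 0) :
    mask V x = x := by
  funext i; by_cases h : i ∈ V <;> simp [mask, h, hx i]

lemma mask_supp (V : Finset (Fin n)) (x : Fin n → ZMod 2) : ∀ i ∉ V, mask V x i = 0 := by
  intro i hi; simp [mask, hi]

lemma mask_idem (V : Finset (Fin n)) (x : Fin n → ZMod 2) :
    mask V (mask V x) = mask V x := mask_eq_self (mask_supp V x)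

lemma rep_sum_single {V : Finset (Fin n)} {x : Fin n → ZMod 2} (hx : ∀ i ∉ V, x i = 0) :
    x = ∑ i ∈ V.filter (fun i => x i = 1), (Pi.single i 1 : Fin n → ZMod 2) := by
  classical
  funext j
  rw [Finset.sum_apply]
  have : ∀ i : Fin n, (Pi.single i 1 : Fin n → ZMod 2) j = if j = i then 1 else 0 := by
    intro i; simp [Pi.single_apply]
  simp only [this]
  rw [Finset.sum_ite_eq (V.filter (fun i => x i = 1)) j (fun _ => (1 : ZMod 2))]
  by_cases hj : j ∈ V.filter (fun i => x i = 1)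
  · rw [if_pos hj]; exact (Finset.mem_filter.mp hj).2
  · rw [if_neg hj]
    by_cases hjV : j ∈ V
    · rcases z2 (x j) with h | h
      · exact h
      · exact absurd (Finset.mem_filter.mpr ⟨hjV, h⟩) hj
    · exact hx j hjV

lemma DegLe.comp_affine {k : ℕ} {g : (Fin n → ZMod 2) → ZMod 2} (hg : DegLe k g)
    (t₀ : Fin n → ZMod 2) (L : (Fin n → ZMod 2) → (Fin n → ZMod 2))
    (hL : ∀ a b, L (a + b) = L a + L b) : DegLe k (fun y => g (t₀ + L y)) := by
  induction k generalizing g with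
  | zero => intro x y; exact hg _ _
  | succ k ih =>
    intro a
    exact (ih (hg (L a))).congr (fun x => by
      show g (t₀ + L x + L a) + g (t₀ + L x) = g (t₀ + L (x + a)) + g (t₀ + L x)
      rw [hL x a, ← add_assoc])

/-- Extension by zero, as a linear map. -/
def extMap (V : Finset (Fin n)) : (↥V → ZMod 2) →ₗ[ZMod 2] (Fin n → ZMod 2) :=
  AddMonoidHom.toZModLinearMap 2
    { toFun := fun y i => if h : i ∈ V then y ⟨i, h⟩ else 0
      map_zero' := by funext i; by_cases h : i ∈ V <;> simp [h]
      map_add' := by intro a b; funext i; by_cases h : i ∈ V <;> simp [h] }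

lemma extMap_apply_mem (V : Finset (Fin n)) (y : ↥V → ZMod 2) {i : Fin n} (hi : i ∈ V) :
    extMap V y i = y ⟨i, hi⟩ := by simp [extMap, hi]

lemma extMap_apply_notMem (V : Finset (Fin n)) (y : ↥V → ZMod 2) {i : Fin n} (hi : i ∉ V) :
    extMap V y i = 0 := by simp [extMap, hi]

lemma extMap_inj (V : Finset (Fin n)) : Function.Injective (extMap V) := by
  intro a b h
  funext ⟨i, hi⟩
  have := congrFun h i
  rwa [extMap_apply_mem V a hi, extMap_apply_mem V b hi] at this

lemma zmove : ∀ p q r : ZMod 2, p + q = r → p = q + r := by decide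

lemma zsplit : ∀ a b c d : ZMod 2, a + b + c + d = 0 → a + b = c + d := by decide

lemma vadd_self (v : Fin n → ZMod 2) : v + v = 0 := by
  funext i; exact zadd_self (v i)

lemma smul_combine1 (ej m : Fin n → ZMod 2) (a b : ZMod 2) :
    b • ej + (m + (a + b) • ej) = m + a • ej := by
  rw [add_smul]
  calc b • ej + (m + (a • ej + b • ej)) = m + a • ej + (b • ej + b • ej) := by abel
    _ = m + a • ej := by rw [vadd_self, add_zero]

lemma smul_combine2 (v' w ej ei : Fin n → ZMod 2) (a b t : ZMod 2) :
    v' + a • ej + (w + b • ej + t • ei) = v' + w + (a + b) • ej + t • ei := by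
  rw [add_smul]; abel

lemma mkPsi (W' : Submodule (ZMod 2) (Fin n → ZMod 2)) (lam : (Fin n → ZMod 2) → ZMod 2)
    (hadd : ∀ a b, lam (a + b) = lam a + lam b) (ej ei : Fin n → ZMod 2) :
    ∃ Ψ : (↥W' × ZMod 2) →ₗ[ZMod 2] (Fin n → ZMod 2),
      ∀ p : ↥W' × ZMod 2,
        Ψ p = (p.1 : Fin n → ZMod 2) + lam (p.1 : Fin n → ZMod 2) • ej + p.2 • ei := by
  have hlam0 : lam 0 = 0 := by
    have h := hadd 0 0
    rw [add_zero] at h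
    rcases z2 (lam 0) with h0 | h0
    · exact h0
    · rw [h0] at h; exact absurd h (by decide)
  refine ⟨AddMonoidHom.toZModLinearMap 2
    { toFun := fun p => (p.1 : Fin n → ZMod 2) + lam (p.1 : Fin n → ZMod 2) • ej + p.2 • ei
      map_zero' := by simp [hlam0]
      map_add' := by
        intro p q
        show ((p.1 + q.1 : ↥W') : Fin n → ZMod 2)
            + lam ((p.1 + q.1 : ↥W') : Fin n → ZMod 2) • ej + (p.2 + q.2) • ei = _
        rw [Submodule.coe_add, hadd, add_smul, add_smul]
        show _ = (p.1 : Fin n → ZMod 2) + lam (p.1 : Fin n → ZMod 2) • ej + p.2 • ei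
          + ((q.1 : Fin n → ZMod 2) + lam (q.1 : Fin n → ZMod 2) • ej + q.2 • ei)
        abel }, fun p => rfl⟩

lemma mkPsi2 (U : Finset (Fin n)) (lam : (Fin n → ZMod 2) → ZMod 2)
    (hadd : ∀ a b, lam (a + b) = lam a + lam b) (e : Fin n → ZMod 2) :
    ∃ Ψ : (↥U → ZMod 2) →ₗ[ZMod 2] (Fin n → ZMod 2),
      ∀ y, Ψ y = extMap U y + lam (extMap U y) • e := by
  have hlam0 : lam 0 = 0 := by
    have h := hadd 0 0
    rw [add_zero] at h
    rcases z2 (lam 0) with h0 | h0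
    · exact h0
    · rw [h0] at h; exact absurd h (by decide)
  refine ⟨AddMonoidHom.toZModLinearMap 2
    { toFun := fun y => extMap U y + lam (extMap U y) • e
      map_zero' := by
        show extMap U 0 + lam (extMap U 0) • e = 0
        rw [map_zero, hlam0, zero_smul, add_zero]
      map_add' := by
        intro a b
        show extMap U (a + b) + lam (extMap U (a + b)) • e = _
        rw [map_add, hadd, add_smul]
        show _ = extMap U a + lam (extMap U a) • e + (extMap U b + lam (extMap U b) • e)
        abel }, fun y => rfl⟩

lemma quad_phase : ∀ (N : ℕ) (V : Finset (Fin n)) (g : (Fin n → ZMod 2) → ZMod 2),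
    V.card ≤ N → DegLe 2 g → (∀ x, g (mask V x) = g x) →
    ∃ (W : Submodule (ZMod 2) (Fin n → ZMod 2)) (v : Fin n → ZMod 2) (u : ZMod 2),
      (∀ w ∈ W, ∀ i, i ∉ V → w i = 0) ∧ (∀ i, i ∉ V → v i = 0) ∧
      V.card ≤ 2 * Module.finrank (ZMod 2) W + 1 ∧ ∀ w ∈ W, g (v + w) = u := by
  classical
  intro N
  induction N with
  | zero =>
    intro V g hcard _ _
    refine ⟨⊥, 0, g 0, ?_, ?_, ?_, ?_⟩
    · intro w hw i _; rw [(Submodule.mem_bot (ZMod 2)).mp hw]; rfl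
    · intro i _; rfl
    · omega
    · intro w hw; rw [(Submodule.mem_bot (ZMod 2)).mp hw, add_zero]
  | succ N ih =>
    intro V g hcard hg hsupp
    by_cases hq : ∃ i ∈ V, ∃ j ∈ V, i ≠ j ∧
        g (Pi.single i 1 + Pi.single j 1) + g (Pi.single i 1) + g (Pi.single j 1) + g 0 = 1
    · -- quadratic case
      obtain ⟨i, hiV, j, hjV, hij, hD2⟩ := hq
      set ei : Fin n → ZMod 2 := Pi.single i 1 with hei
      set ej : Fin n → ZMod 2 := Pi.single j 1 with hej
      set B : (Fin n → ZMod 2) → ZMod 2 := fun y => g (y + ei) + g y with hB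
      have hBadd : ∀ x y, B (x + y) = B x + B y + B 0 := by
        intro x y
        have h0 : g (x + y + ei) + g (x + y) + (g (x + ei) + g x)
            = g (0 + y + ei) + g (0 + y) + (g (0 + ei) + g 0) := hg ei y x 0
        simp only [zero_add] at h0
        have hBxy : B (x + y) + B x = B y + B 0 := by
          simpa [hB] using h0
        calc B (x+y) = B x + (B (x+y) + B x) := zcancel _ _
          _ = B x + (B y + B 0) := by rw [hBxy]
          _ = B x + B y + B 0 := by ring
      have hlamej : B ej + B 0 = 1 := by
        have hexp : B ej + B 0 = g (ej + ei) + g ej + (g ei + g 0) := by simp [hB]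
        rw [hexp, show ej + ei = ei + ej from add_comm _ _]
        calc g (ei + ej) + g ej + (g ei + g 0)
            = g (ei + ej) + g ei + g ej + g 0 := by ring
          _ = 1 := hD2
      set V' : Finset (Fin n) := (V.erase i).erase j with hV'
      have hiV' : i ∉ V' := fun h => (Finset.notMem_erase i V) (Finset.mem_of_mem_erase h)
      have hjV' : j ∉ V' := Finset.notMem_erase j _
      have hV'sub : V' ⊆ V := fun l hl => Finset.mem_of_mem_erase (Finset.mem_of_mem_erase hl)
      have hV'card : V'.card = V.card - 2 := by
        rw [hV', Finset.card_erase_of_mem, Finset.card_erase_of_mem hiV]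
        · omega
        · exact Finset.mem_erase.mpr ⟨hij.symm, hjV⟩
      have hVcard2 : 2 ≤ V.card := by
        have : ({i, j} : Finset (Fin n)) ⊆ V := by
          intro l hl
          rcases Finset.mem_insert.mp hl with rfl | hl
          · exact hiV
          · rw [Finset.mem_singleton.mp hl]; exact hjV
        have h2 : ({i, j} : Finset (Fin n)).card = 2 := Finset.card_pair hij
        calc 2 = ({i, j} : Finset (Fin n)).card := h2.symm
          _ ≤ V.card := Finset.card_le_card this
      set h : (Fin n → ZMod 2) → ZMod 2 :=
        fun y => g (mask V' y + B (mask V' y) • ej) with hh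
      have hmaskadd : ∀ a b, (fun y => mask V' y + (B (mask V' y) + B 0) • ej) (a + b)
          = (fun y => mask V' y + (B (mask V' y) + B 0) • ej) a
            + (fun y => mask V' y + (B (mask V' y) + B 0) • ej) b := by
        intro a b
        show mask V' (a + b) + (B (mask V' (a+b)) + B 0) • ej
          = mask V' a + (B (mask V' a) + B 0) • ej + (mask V' b + (B (mask V' b) + B 0) • ej)
        rw [mask_add, hBadd (mask V' a) (mask V' b)]
        have hsc : (B (mask V' a) + B (mask V' b) + B 0 + B 0)
            = (B (mask V' a) + B 0) + (B (mask V' b) + B 0) := by ring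
        rw [hsc, add_smul]
        abel
      have hdegh : DegLe 2 h := by
        have hcomp := hg.comp_affine (B 0 • ej)
          (fun y => mask V' y + (B (mask V' y) + B 0) • ej) hmaskadd
        exact hcomp.congr (fun y =>
          congrArg g (smul_combine1 ej (mask V' y) (B (mask V' y)) (B 0)))
      have hsupph : ∀ y, h (mask V' y) = h y := by
        intro y; rw [hh]; simp only [mask_idem]
      have hcard' : V'.card ≤ N := by omega
      obtain ⟨W', v', u, hW's, hv's, hWc, hWe⟩ := ih V' h hcard' hdegh hsupph
      set lam : (Fin n → ZMod 2) → ZMod 2 := fun z => B z + B 0 with hlam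
      have hlamadd : ∀ a b, lam (a + b) = lam a + lam b := by
        intro a b
        show B (a + b) + B 0 = (B a + B 0) + (B b + B 0)
        rw [hBadd]; ring
      obtain ⟨Ψ, hΨval⟩ := mkPsi W' lam hlamadd ej ei
      have hsingle_j : ∀ l, l ≠ j → ej l = 0 := by
        intro l hl; rw [hej]; exact Pi.single_eq_of_ne hl 1
      have hsingle_i : ∀ l, l ≠ i → ei l = 0 := by
        intro l hl; rw [hei]; exact Pi.single_eq_of_ne hl 1
      have hΨsupp : ∀ p : ↥W' × ZMod 2, ∀ l, l ∉ V → Ψ p l = 0 := by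
        intro p l hl
        rw [hΨval]
        have h1 : (p.1 : Fin n → ZMod 2) l = 0 := hW's _ p.1.2 l (fun hm => hl (hV'sub hm))
        have h2 : ej l = 0 := hsingle_j l (fun hm => hl (hm ▸ hjV))
        have h3 : ei l = 0 := hsingle_i l (fun hm => hl (hm ▸ hiV))
        rw [Pi.add_apply, Pi.add_apply, Pi.smul_apply, Pi.smul_apply, h1, h2, h3,
          smul_zero, smul_zero, add_zero, add_zero]
      have hΨinj : Function.Injective Ψ := by
        rw [injective_iff_map_eq_zero]
        intro p hp
        have hw0 : (p.1 : Fin n → ZMod 2) = 0 := by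
          funext l
          by_cases hlV : l ∈ V'
          · have hcf := congrFun hp l
            rw [hΨval] at hcf
            have h2 : ej l = 0 := hsingle_j l (fun hm => hjV' (hm ▸ hlV))
            have h3 : ei l = 0 := hsingle_i l (fun hm => hiV' (hm ▸ hlV))
            rw [Pi.add_apply, Pi.add_apply, Pi.smul_apply, Pi.smul_apply, h2, h3,
              smul_zero, smul_zero, add_zero, add_zero] at hcf
            exact hcf
          · exact hW's _ p.1.2 l hlV
        have hlam0 : lam (p.1 : Fin n → ZMod 2) = 0 := by
          rw [hw0]
          show B 0 + B 0 = 0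
          exact zadd_self _
        have hcf := congrFun hp i
        rw [hΨval, hlam0, hw0, zero_smul, add_zero, zero_add] at hcf
        rw [Pi.smul_apply] at hcf
        have h3 : ei i = 1 := by rw [hei]; exact Pi.single_eq_same i 1
        rw [h3, smul_eq_mul, mul_one] at hcf
        have hp2 : p.2 = 0 := hcf
        exact Prod.ext (Subtype.ext hw0) hp2
      refine ⟨LinearMap.range Ψ, v' + B v' • ej, u, ?_, ?_, ?_, ?_⟩
      · intro w hw l hl
        obtain ⟨p, rfl⟩ := hw
        exact hΨsupp p l hl
      · intro l hl
        have h1 : v' l = 0 := hv's l (fun hm => hl (hV'sub hm))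
        have h2 : ej l = 0 := hsingle_j l (fun hm => hl (hm ▸ hjV))
        rw [Pi.add_apply, Pi.smul_apply, h1, h2, smul_zero, add_zero]
      · have hr : Module.finrank (ZMod 2) (LinearMap.range Ψ)
            = Module.finrank (ZMod 2) W' + 1 := by
          rw [LinearMap.finrank_range_of_inj hΨinj]
          simp [Module.finrank_prod]
        rw [hr]
        omega
      · intro w hw
        obtain ⟨p, rfl⟩ := hw
        rw [hΨval, smul_combine2]
        have hBy : B v' + lam (p.1 : Fin n → ZMod 2) = B (v' + (p.1 : Fin n → ZMod 2)) := by
          show B v' + (B (p.1 : Fin n → ZMod 2) + B 0) = _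
          rw [hBadd]; ring
        rw [hBy]
        have hysupp : ∀ l, l ∉ V' → (v' + (p.1 : Fin n → ZMod 2)) l = 0 := by
          intro l hl
          rw [Pi.add_apply, hv's l hl, hW's _ p.1.2 l hl, add_zero]
        have h1 : g (mask V' (v' + (p.1 : Fin n → ZMod 2))
            + B (mask V' (v' + (p.1 : Fin n → ZMod 2))) • ej) = u := hWe p.1 p.1.2
        rw [mask_eq_self hysupp] at h1
        set y : Fin n → ZMod 2 := v' + (p.1 : Fin n → ZMod 2) with hy
        have hBz : B (y + B y • ej) = 0 := by
          rcases z2 (B y) with hb | hb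
          · rw [hb, zero_smul, add_zero]; exact hb
          · rw [hb, one_smul, hBadd]
            calc B y + B ej + B 0 = B y + (B ej + B 0) := by ring
              _ = 1 + 1 := by rw [hb, hlamej]
              _ = 0 := by decide
        rcases z2 p.2 with ht | ht
        · rw [ht, zero_smul, add_zero]; exact h1
        · rw [ht, one_smul]
          have hst : g (y + B y • ej + ei) = g (y + B y • ej) + B (y + B y • ej) :=
            zcancel _ _
          rw [hst, hBz, add_zero]; exact h1
    · -- affine case
      push_neg at hq
      have hD0 : ∀ i ∈ V, ∀ j ∈ V, i ≠ j →
          g (Pi.single i 1 + Pi.single j 1) + g (Pi.single i 1) + g (Pi.single j 1) + g 0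
            = 0 := by
        intro i hi j hj hij
        rcases z2 (g (Pi.single i 1 + Pi.single j 1) + g (Pi.single i 1) + g (Pi.single j 1)
          + g 0) with hv | hv
        · exact hv
        · exact absurd hv (hq i hi j hj hij)
      have hDconst : ∀ (s : Finset (Fin n)), s ⊆ V → ∀ j ∈ V,
          g ((∑ i ∈ s, (Pi.single i 1 : Fin n → ZMod 2)) + Pi.single j 1)
            + g (∑ i ∈ s, (Pi.single i 1 : Fin n → ZMod 2))
          = g (Pi.single j 1) + g 0 := by
        intro s
        induction s using Finset.induction_on with
        | empty => intro _ j _; rw [Finset.sum_empty, zero_add]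
        | @insert a s ha ihs =>
          intro hsub j hjV
          have haV : a ∈ V := hsub (Finset.mem_insert_self a s)
          have hssub : s ⊆ V := fun l hl => hsub (Finset.mem_insert_of_mem hl)
          rw [Finset.sum_insert ha]
          have ihs' := ihs hssub j hjV
          set xs : Fin n → ZMod 2 := ∑ i ∈ s, (Pi.single i 1 : Fin n → ZMod 2) with hxs
          have h0 := hg (Pi.single j 1) (Pi.single a 1) xs 0
          simp only [zero_add] at h0
          by_cases haj : a = j
          · subst haj
            have e1 : (Pi.single a 1 : Fin n → ZMod 2) + xs + Pi.single a 1 = xs := by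
              rw [add_comm (Pi.single a 1) xs, add_assoc, vadd_self, add_zero]
            rw [e1, add_comm (Pi.single a 1) xs, add_comm (g xs)]
            exact ihs'
          · have hd := hD0 a haV j hjV haj
            have hq2 : g (Pi.single a 1 + Pi.single j 1) + g (Pi.single a 1)
                = g (Pi.single j 1) + g 0 := zsplit _ _ _ _ hd
            rw [add_comm (Pi.single a 1) xs]
            rw [zmove _ _ _ h0, ihs', hq2]
            have hfin : ∀ c : ZMod 2, c + (c + c) = c := by decide
            exact hfin _
      have hlin : ∀ (s : Finset (Fin n)), s ⊆ V →
          g (∑ i ∈ s, (Pi.single i 1 : Fin n → ZMod 2))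
            = g 0 + ∑ i ∈ s, (g (Pi.single i 1) + g 0) := by
        intro s
        induction s using Finset.induction_on with
        | empty => intro _; rw [Finset.sum_empty, Finset.sum_empty, add_zero]
        | @insert a s ha ihs =>
          intro hsub
          have haV : a ∈ V := hsub (Finset.mem_insert_self a s)
          have hssub : s ⊆ V := fun l hl => hsub (Finset.mem_insert_of_mem hl)
          rw [Finset.sum_insert ha, Finset.sum_insert ha]
          have hstep := hDconst s hssub a haV
          have hsw : g (Pi.single a 1 + ∑ i ∈ s, (Pi.single i 1 : Fin n → ZMod 2))
              = g (∑ i ∈ s, (Pi.single i 1 : Fin n → ZMod 2)) + (g (Pi.single a 1) + g 0) := by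
            rw [add_comm (Pi.single a 1)]
            exact zmove _ _ _ hstep
          rw [hsw, ihs hssub]
          ring
      have hval : ∀ z : Fin n → ZMod 2, (∀ l, l ∉ V → z l = 0) →
          g z = g 0 + ∑ i ∈ V, z i * (g (Pi.single i 1) + g 0) := by
        intro z hz
        conv_lhs => rw [rep_sum_single hz]
        rw [hlin _ (Finset.filter_subset _ _), Finset.sum_filter]
        congr 1
        apply Finset.sum_congr rfl
        intro i _
        rcases z2 (z i) with hzi | hzi
        · rw [hzi, zero_mul, if_neg]
          intro hcon; exact absurd hcon (by decide)
        · rw [hzi, if_pos rfl, one_mul]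
      by_cases hc : ∀ i ∈ V, g (Pi.single i 1) + g 0 = 0
      · refine ⟨LinearMap.range (extMap V), 0, g 0, ?_, ?_, ?_, ?_⟩
        · intro w hw l hl; obtain ⟨y, rfl⟩ := hw; exact extMap_apply_notMem V y hl
        · intro l _; rfl
        · rw [LinearMap.finrank_range_of_inj (extMap_inj V)]
          have hrk : Module.finrank (ZMod 2) (↥V → ZMod 2) = V.card := by
            simp [Module.finrank_pi]
          omega
        · intro w hw
          obtain ⟨y, rfl⟩ := hw
          rw [zero_add, hval _ (fun l hl => extMap_apply_notMem V y hl)]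
          have hz : ∑ i ∈ V, extMap V y i * (g (Pi.single i 1) + g 0) = 0 :=
            Finset.sum_eq_zero (fun i hi => by rw [hc i hi, mul_zero])
          rw [hz, add_zero]
      · push_neg at hc
        obtain ⟨i₀, hi₀V, hc₀⟩ := hc
        have hc₀1 : g (Pi.single i₀ 1) + g 0 = 1 := by
          rcases z2 (g (Pi.single i₀ 1) + g 0) with hv | hv
          · exact absurd hv hc₀
          · exact hv
        set lam : (Fin n → ZMod 2) → ZMod 2 :=
          fun x => ∑ i ∈ V, x i * (g (Pi.single i 1) + g 0) with hlam
        have hlamadd : ∀ a b, lam (a + b) = lam a + lam b := by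
          intro a b
          show ∑ i ∈ V, (a + b) i * (g (Pi.single i 1) + g 0) = _
          rw [← Finset.sum_add_distrib]
          apply Finset.sum_congr rfl
          intro i _
          rw [Pi.add_apply, add_mul]
        obtain ⟨ψ, hψval⟩ := mkPsi2 (V.erase i₀) lam hlamadd (Pi.single i₀ 1)
        have hψsupp : ∀ y, ∀ l, l ∉ V → ψ y l = 0 := by
          intro y l hl
          rw [hψval]
          have h1 : extMap (V.erase i₀) y l = 0 :=
            extMap_apply_notMem _ y (fun hm => hl (Finset.mem_of_mem_erase hm))
          have h2 : (Pi.single i₀ 1 : Fin n → ZMod 2) l = 0 := by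
            apply Pi.single_eq_of_ne
            intro he
            subst he
            exact hl hi₀V
          rw [Pi.add_apply, Pi.smul_apply, h1, h2, smul_zero, add_zero]
        have hψinj : Function.Injective ψ := by
          rw [injective_iff_map_eq_zero]
          intro y hy
          funext l
          have hli₀ : (l : Fin n) ≠ i₀ := (Finset.mem_erase.mp l.2).1
          have hcf := congrFun hy (l : Fin n)
          rw [hψval] at hcf
          have h2 : (Pi.single i₀ 1 : Fin n → ZMod 2) (l : Fin n) = 0 :=
            Pi.single_eq_of_ne hli₀ 1
          rw [Pi.add_apply, Pi.smul_apply, h2, smul_zero, add_zero,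
            extMap_apply_mem _ y l.2] at hcf
          simpa using hcf
        refine ⟨LinearMap.range ψ, 0, g 0, ?_, ?_, ?_, ?_⟩
        · intro w hw l hl; obtain ⟨y, rfl⟩ := hw; exact hψsupp y l hl
        · intro l _; rfl
        · rw [LinearMap.finrank_range_of_inj hψinj]
          have h1 : Module.finrank (ZMod 2) (↥(V.erase i₀) → ZMod 2) = (V.erase i₀).card := by
            rw [Module.finrank_pi, Fintype.card_coe]
          rw [h1, Finset.card_erase_of_mem hi₀V]
          have hpos : 1 ≤ V.card := Finset.card_pos.mpr ⟨i₀, hi₀V⟩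
          omega
        · intro w hw
          obtain ⟨y, rfl⟩ := hw
          rw [zero_add, hval _ (hψsupp y)]
          have hsum : ∑ i ∈ V, ψ y i * (g (Pi.single i 1) + g 0) = lam (ψ y) := rfl
          rw [hsum]
          have hsingle : lam (Pi.single i₀ 1 : Fin n → ZMod 2) = 1 := by
            show ∑ i ∈ V, (Pi.single i₀ 1 : Fin n → ZMod 2) i * (g (Pi.single i 1) + g 0) = 1
            rw [Finset.sum_eq_single i₀]
            · rw [Pi.single_eq_same, one_mul]; exact hc₀1
            · intro b _ hb
              rw [Pi.single_eq_of_ne hb, zero_mul]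
            · intro habs; exact absurd hi₀V habs
          have hlam0 : lam 0 = 0 := by
            show ∑ i ∈ V, (0 : Fin n → ZMod 2) i * (g (Pi.single i 1) + g 0) = 0
            exact Finset.sum_eq_zero (fun i _ => by rw [Pi.zero_apply, zero_mul])
          have hlamψ : lam (ψ y) = 0 := by
            rw [hψval, hlamadd]
            rcases z2 (lam (extMap (V.erase i₀) y)) with hv | hv
            · rw [hv, zero_smul, hlam0, add_zero]
            · rw [hv, one_smul, hsingle]
              decide
          rw [hlamψ, add_zero]

lemma anfEval_filter (M : Finset (Finset (Fin n))) (p : Finset (Fin n) → Prop)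
    [DecidablePred p] (x : Fin n → ZMod 2)
    (h0 : ∀ S ∈ M, ¬ p S → ∏ j ∈ S, x j = 0) :
    anfEval M x = anfEval (M.filter p) x := by
  unfold anfEval
  rw [← Finset.sum_filter_add_sum_filter_not M p]
  have hz : ∑ S ∈ M.filter (fun S => ¬ p S), ∏ j ∈ S, x j = 0 :=
    Finset.sum_eq_zero (fun S hS =>
      h0 S (Finset.mem_filter.mp hS).1 (Finset.mem_filter.mp hS).2)
  rw [hz, add_zero]

lemma anfEval_mask (M : Finset (Finset (Fin n))) (V : Finset (Fin n))
    (hMV : ∀ S ∈ M, S ⊆ V) (x : Fin n → ZMod 2) :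
    anfEval M (mask V x) = anfEval M x := by
  unfold anfEval
  apply Finset.sum_congr rfl
  intro S hS
  apply Finset.prod_congr rfl
  intro j hj
  have : j ∈ V := hMV S hS hj
  simp [mask, this]

lemma anfEval_degLe_two (M : Finset (Finset (Fin n))) (hdeg : ∀ S ∈ M, S.card ≤ 2) :
    DegLe 2 (anfEval M) := by
  have : DegLe 2 (fun x => ∑ S ∈ M, ∏ j ∈ S, x j) := by
    apply DegLe.sum
    intro S hS
    exact (degLe_monomial S).mono (hdeg S hS)
  exact this.congr (fun x => rfl)

lemma crucial_phase : ∀ (N : ℕ) (V : Finset (Fin n)) (M : Finset (Finset (Fin n))),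
    V.card ≤ N → (∀ S ∈ M, S ⊆ V) →
    ∃ (W : Submodule (ZMod 2) (Fin n → ZMod 2)) (v : Fin n → ZMod 2) (u : ZMod 2),
      (∀ w ∈ W, ∀ i, i ∉ V → w i = 0) ∧ (∀ i, i ∉ V → v i = 0) ∧
      4 * V.card ≤ 10 * Module.finrank (ZMod 2) W + 2 * crucialCount M + 5 ∧
      ∀ w ∈ W, anfEval M (v + w) = u := by
  classical
  intro N
  induction N with
  | zero =>
    intro V M hcard hMV
    have hV : V.card = 0 := by omega
    refine ⟨⊥, 0, anfEval M 0, ?_, ?_, ?_, ?_⟩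
    · intro w hw i _; rw [(Submodule.mem_bot (ZMod 2)).mp hw]; rfl
    · intro i _; rfl
    · omega
    · intro w hw; rw [(Submodule.mem_bot (ZMod 2)).mp hw, add_zero]
  | succ N ih =>
    intro V M hcard hMV
    by_cases hcase : ∃ i : Fin n, 2 ≤ (M.filter (fun S => 3 ≤ S.card ∧ i ∈ S)).card
    · obtain ⟨i, hi2⟩ := hcase
      have hne : (M.filter (fun S => 3 ≤ S.card ∧ i ∈ S)).Nonempty :=
        Finset.card_pos.mp (by omega)
      obtain ⟨S₀, hS₀⟩ := hne
      have hiV : i ∈ V := by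
        have h1 := Finset.mem_filter.mp hS₀
        exact hMV S₀ h1.1 h1.2.2
      set V' := V.erase i with hV'
      set M' := M.filter (fun S => i ∉ S) with hM'
      have hMV' : ∀ S ∈ M', S ⊆ V' := by
        intro S hS l hl
        have h1 := Finset.mem_filter.mp hS
        exact Finset.mem_erase.mpr ⟨fun he => h1.2 (he ▸ hl), hMV S h1.1 hl⟩
      have hV'card : V'.card = V.card - 1 := Finset.card_erase_of_mem hiV
      have hVpos : 1 ≤ V.card := Finset.card_pos.mpr ⟨i, hiV⟩
      obtain ⟨W, v, u, hWs, hvs, hcd, heval⟩ := ih V' M' (by omega) hMV'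
      -- crucial count decreases by at least 2
      have hcc : crucialCount M' + 2 ≤ crucialCount M := by
        have hsplit : ((M.filter (fun S => 3 ≤ S.card)).filter (fun S => i ∈ S)).card
            + ((M.filter (fun S => 3 ≤ S.card)).filter (fun S => ¬ i ∈ S)).card
            = (M.filter (fun S => 3 ≤ S.card)).card :=
          Finset.card_filter_add_card_filter_not _
        have he1 : (M.filter (fun S => 3 ≤ S.card)).filter (fun S => i ∈ S)
            = M.filter (fun S => 3 ≤ S.card ∧ i ∈ S) := by
          rw [Finset.filter_filter]
        have he2 : (M.filter (fun S => 3 ≤ S.card)).filter (fun S => ¬ i ∈ S)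
            = M'.filter (fun S => 3 ≤ S.card) := by
          rw [Finset.filter_filter, Finset.filter_filter]
          apply Finset.filter_congr
          intro S _
          constructor
          · rintro ⟨h1, h2⟩; exact ⟨h2, h1⟩
          · rintro ⟨h1, h2⟩; exact ⟨h2, h1⟩
        rw [he1, he2] at hsplit
        unfold crucialCount
        omega
      refine ⟨W, v, u, ?_, ?_, ?_, ?_⟩
      · intro w hw l hl
        exact hWs w hw l (fun hm => hl (Finset.mem_of_mem_erase hm))
      · intro l hl
        exact hvs l (fun hm => hl (Finset.mem_of_mem_erase hm))
      · omega
      · intro w hw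
        have hsupp : (v + w) i = 0 := by
          rw [Pi.add_apply, hvs i (Finset.notMem_erase i V), hWs w hw i (Finset.notMem_erase i V),
            add_zero]
        have := anfEval_filter M (fun S => i ∉ S) (v + w) (fun S _ hnS => by
          exact Finset.prod_eq_zero (not_not.mp hnS) hsupp)
        rw [this]
        exact heval w hw
    · -- all crucial terms pairwise disjoint
      push_neg at hcase
      set Cr := M.filter (fun S => 3 ≤ S.card) with hCr
      have hCrM : ∀ S ∈ Cr, S ∈ M ∧ 3 ≤ S.card := fun S hS =>
        ⟨(Finset.mem_filter.mp hS).1, (Finset.mem_filter.mp hS).2⟩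
      have hdisj : ∀ S ∈ Cr, ∀ T ∈ Cr, S ≠ T → Disjoint S T := by
        intro S hS T hT hST
        rw [Finset.disjoint_left]
        intro a haS haT
        by_contra _
        have h2 : 2 ≤ (M.filter (fun X => 3 ≤ X.card ∧ a ∈ X)).card := by
          apply Finset.one_lt_card.mpr
          refine ⟨S, ?_, T, ?_, hST⟩
          · exact Finset.mem_filter.mpr ⟨(hCrM S hS).1, (hCrM S hS).2, haS⟩
          · exact Finset.mem_filter.mpr ⟨(hCrM T hT).1, (hCrM T hT).2, haT⟩
        exact absurd h2 (by have := hcase a; omega)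
      have hCrne : ∀ S ∈ Cr, S.Nonempty := fun S hS =>
        Finset.card_pos.mp (by have := (hCrM S hS).2; omega)
      set D : Finset (Fin n) :=
        Cr.attach.image (fun S => S.1.min' (hCrne S.1 S.2)) with hD
      have hDcard : D.card ≤ Cr.card := by
        calc D.card ≤ Cr.attach.card := Finset.card_image_le
          _ = Cr.card := Finset.card_attach
      have hDV : D ⊆ V := by
        intro l hl
        obtain ⟨S, _, rfl⟩ := Finset.mem_image.mp hl
        exact hMV S.1 (hCrM S.1 S.2).1 (S.1.min'_mem (hCrne S.1 S.2))
      have h3c : 3 * Cr.card ≤ V.card := by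
        have hsum : ∑ S ∈ Cr, S.card = (Cr.biUnion id).card :=
          (Finset.card_biUnion (fun S hS T hT hST => hdisj S hS T hT hST)).symm
        have hsub : Cr.biUnion id ⊆ V := by
          intro l hl
          obtain ⟨S, hS, hlS⟩ := Finset.mem_biUnion.mp hl
          exact hMV S (hCrM S hS).1 hlS
        have h1 : 3 * Cr.card ≤ ∑ S ∈ Cr, S.card := by
          calc 3 * Cr.card = ∑ _S ∈ Cr, 3 := by rw [Finset.sum_const, smul_eq_mul]; ring
            _ ≤ ∑ S ∈ Cr, S.card := Finset.sum_le_sum (fun S hS => (hCrM S hS).2)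
        calc 3 * Cr.card ≤ ∑ S ∈ Cr, S.card := h1
          _ = (Cr.biUnion id).card := hsum
          _ ≤ V.card := Finset.card_le_card hsub
      set V'' := V \ D with hV''
      set M'' := M.filter (fun S => S ⊆ V'') with hM''
      have hM''deg : ∀ S ∈ M'', S.card ≤ 2 := by
        intro S hS
        by_contra hbig
        push_neg at hbig
        have hSCr : S ∈ Cr := Finset.mem_filter.mpr
          ⟨(Finset.mem_filter.mp hS).1, by omega⟩
        have hminD : S.min' (hCrne S hSCr) ∈ D :=
          Finset.mem_image.mpr ⟨⟨S, hSCr⟩, Finset.mem_attach _ _, rfl⟩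
        have hminS : S.min' (hCrne S hSCr) ∈ S := S.min'_mem _
        have := (Finset.mem_filter.mp hS).2 hminS
        have h2 := (Finset.mem_sdiff.mp this).2
        exact h2 hminD
      have hMV'' : ∀ S ∈ M'', S ⊆ V'' := fun S hS => (Finset.mem_filter.mp hS).2
      obtain ⟨W, v, u, hWs, hvs, hcd, heval⟩ := quad_phase V''.card V'' (anfEval M'')
        (le_refl _) (anfEval_degLe_two M'' hM''deg)
        (fun x => anfEval_mask M'' V'' hMV'' x)
      have hV''sub : V'' ⊆ V := Finset.sdiff_subset
      refine ⟨W, v, u, ?_, ?_, ?_, ?_⟩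
      · intro w hw l hl
        exact hWs w hw l (fun hm => hl (hV''sub hm))
      · intro l hl
        exact hvs l (fun hm => hl (hV''sub hm))
      · have hV''card : V''.card = V.card - D.card := Finset.card_sdiff_of_subset hDV
        have hcc : crucialCount M = Cr.card := rfl
        omega
      · intro w hw
        have hsupp : ∀ l, l ∉ V'' → (v + w) l = 0 := by
          intro l hl
          rw [Pi.add_apply, hvs l hl, hWs w hw l hl, add_zero]
        have := anfEval_filter M (fun S => S ⊆ V'') (v + w) (fun S _ hnS => by
          rw [Finset.not_subset] at hnS
          obtain ⟨j, hjS, hjV''⟩ := hnS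
          exact Finset.prod_eq_zero hjS (hsupp j hjV''))
        rw [this]
        exact heval w hw


lemma exists_good_subset (M : Finset (Finset (Fin n))) (k : ℕ) (hkn : k ≤ n) :
    ∃ K : Finset (Fin n), K.card = k ∧
      (M.filter (fun S => 3 ≤ S.card ∧ S ⊆ K)).card * Nat.choose n k
        ≤ (M.filter (fun S => 3 ≤ S.card)).card * Nat.choose (n-3) (k-3) := by
  classical
  set T := Finset.powersetCard k (Finset.univ : Finset (Fin n)) with hT
  have hTcard : T.card = Nat.choose n k := by
    rw [hT, Finset.card_powersetCard, Finset.card_univ, Fintype.card_fin]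
  have hTne : T.Nonempty := by
    apply Finset.powersetCard_nonempty.mpr
    rw [Finset.card_univ, Fintype.card_fin]; exact hkn
  have hcount : ∀ S : Finset (Fin n), 3 ≤ S.card →
      (T.filter (fun K => S ⊆ K)).card ≤ Nat.choose (n-3) (k-3) := by
    intro S hS3
    obtain ⟨S', hS'sub, hS'card⟩ := Finset.exists_subset_card_eq hS3
    have hinj : (T.filter (fun K => S ⊆ K)).card ≤
        (Finset.powersetCard (k-3) ((Finset.univ : Finset (Fin n)) \ S')).card := by
      apply Finset.card_le_card_of_injOn (fun K => K \ S')
      · intro K hK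
        have hKT := Finset.mem_filter.mp hK
        have hKcard : K.card = k := (Finset.mem_powersetCard.mp hKT.1).2
        have hS'K : S' ⊆ K := hS'sub.trans hKT.2
        apply Finset.mem_powersetCard.mpr
        constructor
        · intro l hl
          exact Finset.mem_sdiff.mpr ⟨Finset.mem_univ l, (Finset.mem_sdiff.mp hl).2⟩
        · rw [Finset.card_sdiff_of_subset hS'K, hKcard, hS'card]
      · intro K1 h1 K2 h2 heq
        have hS'K1 : S' ⊆ K1 := hS'sub.trans (Finset.mem_filter.mp (Finset.mem_coe.mp h1)).2
        have hS'K2 : S' ⊆ K2 := hS'sub.trans (Finset.mem_filter.mp (Finset.mem_coe.mp h2)).2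
        have heq' : K1 \ S' = K2 \ S' := heq
        have hu : K1 \ S' ∪ S' = K2 \ S' ∪ S' := by rw [heq']
        rwa [Finset.sdiff_union_of_subset hS'K1, Finset.sdiff_union_of_subset hS'K2] at hu
    calc (T.filter (fun K => S ⊆ K)).card
        ≤ (Finset.powersetCard (k-3) ((Finset.univ : Finset (Fin n)) \ S')).card := hinj
      _ = Nat.choose (n-3) (k-3) := by
          rw [Finset.card_powersetCard, Finset.card_sdiff_of_subset (Finset.subset_univ S'),
            Finset.card_univ, Fintype.card_fin, hS'card]
  have hdouble : ∑ K ∈ T, (M.filter (fun S => 3 ≤ S.card ∧ S ⊆ K)).card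
      ≤ (M.filter (fun S => 3 ≤ S.card)).card * Nat.choose (n-3) (k-3) := by
    have hswap : ∑ K ∈ T, (M.filter (fun S => 3 ≤ S.card ∧ S ⊆ K)).card
        = ∑ S ∈ M.filter (fun S => 3 ≤ S.card), (T.filter (fun K => S ⊆ K)).card := by
      have hff : ∀ K : Finset (Fin n), (M.filter (fun S => 3 ≤ S.card ∧ S ⊆ K))
          = (M.filter (fun S => 3 ≤ S.card)).filter (fun S => S ⊆ K) := by
        intro K; rw [Finset.filter_filter]
      calc ∑ K ∈ T, (M.filter (fun S => 3 ≤ S.card ∧ S ⊆ K)).card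
          = ∑ K ∈ T, ∑ S ∈ M.filter (fun S => 3 ≤ S.card), if S ⊆ K then 1 else 0 := by
            apply Finset.sum_congr rfl
            intro K _
            rw [hff K, Finset.card_filter]
        _ = ∑ S ∈ M.filter (fun S => 3 ≤ S.card), ∑ K ∈ T, if S ⊆ K then 1 else 0 :=
            Finset.sum_comm
        _ = ∑ S ∈ M.filter (fun S => 3 ≤ S.card), (T.filter (fun K => S ⊆ K)).card := by
            apply Finset.sum_congr rfl
            intro S _
            rw [Finset.card_filter]
    rw [hswap]
    calc ∑ S ∈ M.filter (fun S => 3 ≤ S.card), (T.filter (fun K => S ⊆ K)).card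
        ≤ ∑ _S ∈ M.filter (fun S => 3 ≤ S.card), Nat.choose (n-3) (k-3) :=
          Finset.sum_le_sum (fun S hS => hcount S (Finset.mem_filter.mp hS).2)
      _ = (M.filter (fun S => 3 ≤ S.card)).card * Nat.choose (n-3) (k-3) := by
          rw [Finset.sum_const, smul_eq_mul]
  have hmin' := Finset.exists_min_image T
    (fun K => (M.filter (fun S => 3 ≤ S.card ∧ S ⊆ K)).card) hTne
  obtain ⟨K, hKT, hKmin⟩ := hmin' 
  refine ⟨K, (Finset.mem_powersetCard.mp hKT).2, ?_⟩
  have hmin : T.card * (M.filter (fun S => 3 ≤ S.card ∧ S ⊆ K)).card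
      ≤ ∑ K' ∈ T, (M.filter (fun S => 3 ≤ S.card ∧ S ⊆ K')).card := by
    have := Finset.card_nsmul_le_sum T
      (fun K' => (M.filter (fun S => 3 ≤ S.card ∧ S ⊆ K')).card)
      ((M.filter (fun S => 3 ≤ S.card ∧ S ⊆ K)).card)
      (fun K' hK' => hKmin K' hK')
    rwa [smul_eq_mul] at this
  calc (M.filter (fun S => 3 ≤ S.card ∧ S ⊆ K)).card * Nat.choose n k
      = T.card * (M.filter (fun S => 3 ≤ S.card ∧ S ⊆ K)).card := by
        rw [hTcard]; ring
    _ ≤ ∑ K' ∈ T, (M.filter (fun S => 3 ≤ S.card ∧ S ⊆ K')).card := hmin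
    _ ≤ (M.filter (fun S => 3 ≤ S.card)).card * Nat.choose (n-3) (k-3) := hdouble

lemma count_bound (a b cc s : ℕ) (hab : a ≤ b)
    (h : cc * Nat.choose (b+3) (a+3) ≤ s * Nat.choose b a) :
    cc * ((b+3)*(b+2)*(b+1)) ≤ s * ((a+3)*(a+2)*(a+1)) := by
  have hkn : a + 3 ≤ b + 3 := by omega
  have e1 : Nat.choose (b+3) (a+3) * (a+3).factorial * (b-a).factorial = (b+3).factorial := by
    have he := Nat.choose_mul_factorial_mul_factorial hkn
    have hd : b + 3 - (a+3) = b - a := by omega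
    rw [hd] at he
    exact he
  have e2 : Nat.choose b a * a.factorial * (b-a).factorial = b.factorial :=
    Nat.choose_mul_factorial_mul_factorial hab
  have f1 : (b+3).factorial = (b+3)*(b+2)*(b+1)*b.factorial := by
    show (b+2+1).factorial = _
    rw [Nat.factorial_succ, Nat.factorial_succ, Nat.factorial_succ]
    ring
  have f2 : (a+3).factorial = (a+3)*(a+2)*(a+1)*a.factorial := by
    show (a+2+1).factorial = _
    rw [Nat.factorial_succ, Nat.factorial_succ, Nat.factorial_succ]
    ring
  have hm : cc * Nat.choose (b+3) (a+3) * ((a+3).factorial * (b-a).factorial)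
      ≤ s * Nat.choose b a * ((a+3).factorial * (b-a).factorial) :=
    Nat.mul_le_mul_right _ h
  have hL : cc * Nat.choose (b+3) (a+3) * ((a+3).factorial * (b-a).factorial)
      = cc * ((b+3)*(b+2)*(b+1)) * b.factorial := by
    calc cc * Nat.choose (b+3) (a+3) * ((a+3).factorial * (b-a).factorial)
        = cc * (Nat.choose (b+3) (a+3) * (a+3).factorial * (b-a).factorial) := by ring
      _ = cc * (b+3).factorial := by rw [e1]
      _ = _ := by rw [f1]; ring
  have hR : s * Nat.choose b a * ((a+3).factorial * (b-a).factorial)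
      = s * ((a+3)*(a+2)*(a+1)) * b.factorial := by
    calc s * Nat.choose b a * ((a+3).factorial * (b-a).factorial)
        = s * ((a+3)*(a+2)*(a+1)) * (Nat.choose b a * a.factorial * (b-a).factorial) := by
          rw [f2]; ring
      _ = _ := by rw [e2]
  rw [hL, hR] at hm
  exact Nat.le_of_mul_le_mul_right hm (Nat.factorial_pos b)

lemma cube_compare (a b : ℕ) (hab : a ≤ b) :
    (a+3)*(a+2)*(a+1) * ((b+3)*(b+3)*(b+3)) ≤ (a+3)*(a+3)*(a+3) * ((b+3)*(b+2)*(b+1)) := by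
  have h1 : (a+2)*(b+3) ≤ (a+3)*(b+2) := by nlinarith
  have h2 : (a+1)*(b+3) ≤ (a+3)*(b+1) := by nlinarith
  calc (a+3)*(a+2)*(a+1) * ((b+3)*(b+3)*(b+3))
      = ((a+3)*(b+3)) * (((a+2)*(b+3)) * ((a+1)*(b+3))) := by ring
    _ ≤ ((a+3)*(b+3)) * (((a+3)*(b+2)) * ((a+3)*(b+1))) :=
        Nat.mul_le_mul_left _ (Nat.mul_le_mul h1 h2)
    _ = (a+3)*(a+3)*(a+3) * ((b+3)*(b+2)*(b+1)) := by ring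

lemma cube_bound (cc s a b : ℕ) (hab : a ≤ b)
    (h : cc * ((b+3)*(b+2)*(b+1)) ≤ s * ((a+3)*(a+2)*(a+1))) :
    cc * ((b+3)*(b+3)*(b+3)) ≤ s * ((a+3)*(a+3)*(a+3)) := by
  have hpos : 0 < (b+3)*(b+2)*(b+1) := by positivity
  have hstep : cc * ((b+3)*(b+3)*(b+3)) * ((b+3)*(b+2)*(b+1))
      ≤ s * ((a+3)*(a+3)*(a+3)) * ((b+3)*(b+2)*(b+1)) := by
    calc cc * ((b+3)*(b+3)*(b+3)) * ((b+3)*(b+2)*(b+1))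
        = cc * ((b+3)*(b+2)*(b+1)) * ((b+3)*(b+3)*(b+3)) := by ring
      _ ≤ s * ((a+3)*(a+2)*(a+1)) * ((b+3)*(b+3)*(b+3)) := Nat.mul_le_mul_right _ h
      _ = s * ((a+3)*(a+2)*(a+1) * ((b+3)*(b+3)*(b+3))) := by ring
      _ ≤ s * ((a+3)*(a+3)*(a+3) * ((b+3)*(b+2)*(b+1))) :=
          Nat.mul_le_mul_left _ (cube_compare a b hab)
      _ = s * ((a+3)*(a+3)*(a+3)) * ((b+3)*(b+2)*(b+1)) := by ring
  exact Nat.le_of_mul_le_mul_right hstep hpos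

/-- for `0 < ε < 2`, a Boolean function with algebraic thickness at most
`n^(3-ε)` (i.e. some composition with an affine bijection has sparsity at most `n^(3-ε)`)
is constant on some affine subspace of dimension at least `(4/15)·√((2/3)·n^ε) - 3`. -/
theorem stmt5 {n : ℕ} (ε : ℝ) (hε1 : 0 < ε) (hε2 : ε < 2)
    (f : (Fin n → ZMod 2) → ZMod 2)
    (hT : ∃ (A : (Fin n → ZMod 2) ≃ᵃ[ZMod 2] (Fin n → ZMod 2))
      (M : Finset (Finset (Fin n))),
      IsANF (f ∘ ⇑A) M ∧ (M.card : ℝ) ≤ (n : ℝ) ^ ((3 : ℝ) - ε)) :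
    ∃ (W : Submodule (ZMod 2) (Fin n → ZMod 2)) (v : Fin n → ZMod 2) (u : ZMod 2),
      (4 / 15 : ℝ) * Real.sqrt (2 / 3 * (n : ℝ) ^ ε) - 3 ≤ (Module.finrank (ZMod 2) W : ℝ) ∧
      ∀ w ∈ W, f (v + w) = u := by
  classical
  obtain ⟨A, M, hANF, hMle⟩ := hT
  by_cases htriv : (4 / 15 : ℝ) * Real.sqrt (2 / 3 * (n : ℝ) ^ ε) - 3 ≤ 0
  · refine ⟨⊥, 0, f 0, ?_, ?_⟩
    · have h0 : Module.finrank (ZMod 2) (⊥ : Submodule (ZMod 2) (Fin n → ZMod 2)) = 0 :=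
        finrank_bot _ _
      rw [h0]
      simpa using htriv
    · intro w hw
      rw [(Submodule.mem_bot (ZMod 2)).mp hw, add_zero]
  · push_neg at htriv
    set κ : ℝ := Real.sqrt (2 / 3 * (n : ℝ) ^ ε) with hκdef
    have hκnn : 0 ≤ κ := Real.sqrt_nonneg _
    have hκbig : (45 : ℝ) / 4 < κ := by linarith only [htriv]
    have hκsq : κ ^ 2 = 2 / 3 * (n : ℝ) ^ ε := Real.sq_sqrt (by positivity)
    have hn1 : 1 ≤ n := by
      rcases Nat.eq_zero_or_pos n with rfl | h
      · exfalso
        have hz : ((0 : ℕ) : ℝ) ^ ε = 0 := by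
          rw [Nat.cast_zero]; exact Real.zero_rpow (ne_of_gt hε1)
        have hκ0 : κ = 0 := by rw [hκdef, hz, mul_zero, Real.sqrt_zero]
        rw [hκ0] at hκbig
        linarith only [hκbig]
      · exact h
    have hn0 : (0 : ℝ) < n := by exact_mod_cast hn1
    have hnn : (1 : ℝ) ≤ n := by exact_mod_cast hn1
    have hκn : κ < n := by
      have h2 : (n : ℝ) ^ ε ≤ (n : ℝ) ^ (2 : ℝ) :=
        Real.rpow_le_rpow_of_exponent_le hnn hε2.le
      have h3 : (n : ℝ) ^ (2 : ℝ) = (n : ℝ) * (n : ℝ) := by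
        rw [show (2 : ℝ) = ((2 : ℕ) : ℝ) by norm_num, Real.rpow_natCast]; ring
      have h2' : (n : ℝ) ^ ε ≤ (n : ℝ) * (n : ℝ) := h3 ▸ h2
      have h1r : (1 : ℝ) ≤ (n : ℝ) * (n : ℝ) := by nlinarith only [hnn]
      have h4 : κ * κ < (n : ℝ) * (n : ℝ) := by
        have hr : κ * κ = 2 / 3 * (n : ℝ) ^ ε := by rw [← hκsq]; ring
        rw [hr]
        linarith only [h2', h1r]
      by_contra hcon
      push_neg at hcon
      have := mul_le_mul hcon hcon hn0.le hκnn
      linarith only [this, h4]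
    set k : ℕ := ⌊κ⌋₊ with hkdef
    have hkκ : (k : ℝ) ≤ κ := Nat.floor_le hκnn
    have hκk1 : κ - 1 ≤ (k : ℝ) := (Nat.sub_one_lt_floor κ).le
    have hk11 : 11 ≤ k := by
      apply Nat.le_floor
      push_cast
      linarith only [hκbig]
    have hkn : k ≤ n := by
      have hlt : (k : ℝ) < (n : ℝ) := lt_of_le_of_lt hkκ hκn
      exact_mod_cast hlt.le
    obtain ⟨K, hKcard, hKb⟩ := exists_good_subset M k hkn
    set c : ℕ := (M.filter (fun S => 3 ≤ S.card ∧ S ⊆ K)).card with hcdef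
    have hKb2 : c * Nat.choose n k ≤ M.card * Nat.choose (n - 3) (k - 3) :=
      le_trans hKb (Nat.mul_le_mul_right _ (Finset.card_filter_le M _))
    -- convert the binomial inequality into a cube inequality
    have hka : k - 3 + 3 = k := by omega
    have hnb : n - 3 + 3 = n := by omega
    have hab : k - 3 ≤ n - 3 := by omega
    have hKb2' : c * Nat.choose ((n - 3) + 3) ((k - 3) + 3)
        ≤ M.card * Nat.choose (n - 3) (k - 3) := by
      rw [hka, hnb]; exact hKb2
    have hq1 := count_bound (k - 3) (n - 3) c M.card hab hKb2'
    have hq2 := cube_bound c M.card (k - 3) (n - 3) hab hq1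
    rw [hka, hnb] at hq2
    have hreal : (c : ℝ) * ((n : ℝ) * (n : ℝ) * (n : ℝ))
        ≤ (M.card : ℝ) * ((k : ℝ) * (k : ℝ) * (k : ℝ)) := by
      exact_mod_cast hq2
    have hε0 : (0 : ℝ) < (n : ℝ) ^ ε := Real.rpow_pos_of_pos hn0 ε
    have hck : (c : ℝ) ≤ 2 / 3 * (k : ℝ) := by
      have h35 : (n : ℝ) ^ ((3 : ℝ) - ε) * (n : ℝ) ^ ε = (n : ℝ) ^ (3 : ℝ) := by
        rw [← Real.rpow_add hn0]; ring_nf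
      have h3n : (n : ℝ) ^ (3 : ℝ) = (n : ℝ) * (n : ℝ) * (n : ℝ) := by
        rw [show (3 : ℝ) = ((3 : ℕ) : ℝ) by norm_num, Real.rpow_natCast]; ring
      have hMle2 : (M.card : ℝ) * (n : ℝ) ^ ε ≤ (n : ℝ) * (n : ℝ) * (n : ℝ) := by
        calc (M.card : ℝ) * (n : ℝ) ^ ε
            ≤ (n : ℝ) ^ ((3 : ℝ) - ε) * (n : ℝ) ^ ε :=
              mul_le_mul_of_nonneg_right hMle hε0.le
          _ = (n : ℝ) * (n : ℝ) * (n : ℝ) := by rw [h35, h3n]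
      have hknn : (0 : ℝ) ≤ (k : ℝ) := Nat.cast_nonneg k
      have hksq : (k : ℝ) * (k : ℝ) ≤ 2 / 3 * (n : ℝ) ^ ε := by
        nlinarith only [hkκ, hκsq, hknn]
      have t1 : (c : ℝ) * ((n : ℝ) * (n : ℝ) * (n : ℝ)) * (n : ℝ) ^ ε
          ≤ (M.card : ℝ) * ((k : ℝ) * (k : ℝ) * (k : ℝ)) * (n : ℝ) ^ ε :=
        mul_le_mul_of_nonneg_right hreal hε0.le
      have t3 : ((M.card : ℝ) * (n : ℝ) ^ ε) * ((k : ℝ) * (k : ℝ) * (k : ℝ))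
          ≤ ((n : ℝ) * (n : ℝ) * (n : ℝ)) * ((k : ℝ) * (k : ℝ) * (k : ℝ)) :=
        mul_le_mul_of_nonneg_right hMle2 (by positivity)
      have t4 : (c : ℝ) * (n : ℝ) ^ ε ≤ (k : ℝ) * (k : ℝ) * (k : ℝ) := by
        have hchain : (c : ℝ) * ((n : ℝ) * (n : ℝ) * (n : ℝ)) * (n : ℝ) ^ ε
            ≤ ((n : ℝ) * (n : ℝ) * (n : ℝ)) * ((k : ℝ) * (k : ℝ) * (k : ℝ)) := by
          calc (c : ℝ) * ((n : ℝ) * (n : ℝ) * (n : ℝ)) * (n : ℝ) ^ ε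
              ≤ (M.card : ℝ) * ((k : ℝ) * (k : ℝ) * (k : ℝ)) * (n : ℝ) ^ ε := t1
            _ = ((M.card : ℝ) * (n : ℝ) ^ ε) * ((k : ℝ) * (k : ℝ) * (k : ℝ)) := by ring
            _ ≤ ((n : ℝ) * (n : ℝ) * (n : ℝ)) * ((k : ℝ) * (k : ℝ) * (k : ℝ)) := t3
        have hn3pos : (0 : ℝ) < (n : ℝ) * (n : ℝ) * (n : ℝ) := by positivity
        have hchain' : ((n : ℝ) * (n : ℝ) * (n : ℝ)) * ((c : ℝ) * (n : ℝ) ^ ε)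
            ≤ ((n : ℝ) * (n : ℝ) * (n : ℝ)) * ((k : ℝ) * (k : ℝ) * (k : ℝ)) := by
          calc ((n : ℝ) * (n : ℝ) * (n : ℝ)) * ((c : ℝ) * (n : ℝ) ^ ε)
              = (c : ℝ) * ((n : ℝ) * (n : ℝ) * (n : ℝ)) * (n : ℝ) ^ ε := by ring
            _ ≤ _ := hchain
        exact le_of_mul_le_mul_left hchain' hn3pos
      have t5 : (k : ℝ) * (k : ℝ) * (k : ℝ) ≤ (2 / 3 * (k : ℝ)) * (n : ℝ) ^ ε := by
        calc (k : ℝ) * (k : ℝ) * (k : ℝ) = ((k : ℝ) * (k : ℝ)) * (k : ℝ) := by ring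
          _ ≤ (2 / 3 * (n : ℝ) ^ ε) * (k : ℝ) := mul_le_mul_of_nonneg_right hksq hknn
          _ = (2 / 3 * (k : ℝ)) * (n : ℝ) ^ ε := by ring
      have t6 : (c : ℝ) * (n : ℝ) ^ ε ≤ (2 / 3 * (k : ℝ)) * (n : ℝ) ^ ε := t4.trans t5
      exact le_of_mul_le_mul_right t6 hε0
    -- apply the structural result on the chosen coordinate set K
    set MK := M.filter (fun S => S ⊆ K) with hMKdef
    obtain ⟨W0, v0, u, hW0s, hv0s, hcd, heval⟩ :=
      crucial_phase K.card K MK le_rfl (fun S hS => (Finset.mem_filter.mp hS).2)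
    have hccMK : crucialCount MK = c := by
      unfold crucialCount
      rw [hMKdef, Finset.filter_filter, hcdef]
      congr 1
      ext S
      simp only [Finset.mem_filter]
      tauto
    have hfA : ∀ w ∈ W0, f (A (v0 + w)) = u := by
      intro w hw
      have h1 : (f ∘ ⇑A) (v0 + w) = anfEval M (v0 + w) := hANF _
      have h2 : anfEval M (v0 + w) = anfEval MK (v0 + w) := by
        rw [hMKdef]
        apply anfEval_filter
        intro S _ hnS
        rw [Finset.not_subset] at hnS
        obtain ⟨j, hjS, hjK⟩ := hnS
        apply Finset.prod_eq_zero hjS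
        rw [Pi.add_apply, hv0s j hjK, hW0s w hw j hjK, add_zero]
      have h3 : anfEval MK (v0 + w) = u := heval w hw
      calc f (A (v0 + w)) = (f ∘ ⇑A) (v0 + w) := rfl
        _ = u := by rw [h1, h2, h3]
    refine ⟨W0.map (A.linear : (Fin n → ZMod 2) →ₗ[ZMod 2] (Fin n → ZMod 2)), A v0, u, ?_, ?_⟩
    · rw [LinearEquiv.finrank_map_eq]
      have hcdR : (4 : ℝ) * (k : ℝ)
          ≤ 10 * (Module.finrank (ZMod 2) W0 : ℝ) + 2 * (c : ℝ) + 5 := by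
        rw [hKcard, hccMK] at hcd
        exact_mod_cast hcd
      linarith only [hck, hκk1, hcdR]
    · intro w hw
      obtain ⟨w', hw', rfl⟩ := Submodule.mem_map.mp hw
      have hA : A (v0 + w') = A v0 + A.linear w' := affine_add A v0 w'
      have hres : f (A (v0 + w')) = u := hfA w' hw'
      rw [hA] at hres
      exact hres
end

section
/- Let f : F_2^n → F_2 be a Boolean function of algebraic degree at most 2. Then f is constant on some affine subspace of F_2^n of dimension at least ⌊n/2⌋. -/
open Finset

/-- The bilinear-form-like map attached to `f`. -/
def Bf {n : ℕ} (f : (Fin n → ZMod 2) → ZMod 2) (x y : Fin n → ZMod 2) : ZMod 2 :=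
  f (x + y) + f x + f y + f 0

lemma z2cases : ∀ c : ZMod 2, c = 0 ∨ c = 1 := by decide

/-- degree ≤ 2 implies vanishing of the triple difference -/
lemma quad_of_anf {n : ℕ} (f : (Fin n → ZMod 2) → ZMod 2) (M : Finset (Finset (Fin n)))
    (hM : IsANF f M) (hdeg : ∀ S ∈ M, S.card ≤ 2) :
    ∀ x y z, f (x+y+z) + f (x+y) + f (x+z) + f (y+z) + f x + f y + f z + f 0 = 0 := by
  intro x y z
  have e : ∀ w, f w = anfEval M w := hM
  rw [e, e, e, e, e, e, e, e]
  unfold anfEval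
  rw [← Finset.sum_add_distrib, ← Finset.sum_add_distrib, ← Finset.sum_add_distrib,
    ← Finset.sum_add_distrib, ← Finset.sum_add_distrib, ← Finset.sum_add_distrib,
    ← Finset.sum_add_distrib]
  apply Finset.sum_eq_zero
  intro S hS
  have hc := hdeg S hS
  obtain h0 | h1 | h2 : S.card = 0 ∨ S.card = 1 ∨ S.card = 2 := by omega
  · obtain rfl := Finset.card_eq_zero.mp h0
    simp only [Finset.prod_empty]
    decide
  · obtain ⟨i, rfl⟩ := Finset.card_eq_one.mp h1
    simp only [Finset.prod_singleton, Pi.add_apply, Pi.zero_apply]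
    generalize x i = p
    generalize y i = q
    generalize z i = s
    revert p q s; decide
  · obtain ⟨i, j, hij, rfl⟩ := Finset.card_eq_two.mp h2
    simp only [Finset.prod_pair hij, Pi.add_apply, Pi.zero_apply]
    generalize x i = p1
    generalize x j = p2
    generalize y i = q1
    generalize y j = q2
    generalize z i = s1
    generalize z j = s2
    revert p1 p2 q1 q2 s1 s2; decide

lemma quadratic_constant {n : ℕ} (f : (Fin n → ZMod 2) → ZMod 2)
    (Q : ∀ x y z, f (x+y+z) + f (x+y) + f (x+z) + f (y+z) + f x + f y + f z + f 0 = 0) :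
    ∀ (r : ℕ) (U : Submodule (ZMod 2) (Fin n → ZMod 2)), Module.finrank (ZMod 2) U ≤ r →
    ∃ (W : Submodule (ZMod 2) (Fin n → ZMod 2)) (v : Fin n → ZMod 2),
      W ≤ U ∧ v ∈ U ∧ Module.finrank (ZMod 2) U / 2 ≤ Module.finrank (ZMod 2) W ∧
      ∀ w ∈ W, f (v + w) = f v := by
  classical
  -- basic properties of Bf
  have hxx : ∀ x : Fin n → ZMod 2, x + x = 0 := fun x =>
    funext fun i => (by decide : ∀ a : ZMod 2, a + a = 0) (x i)
  have hBaddL : ∀ x x' y, Bf f (x + x') y = Bf f x y + Bf f x' y := by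
    intro x x' y
    have h := Q x x' y
    exact (by decide : ∀ p1 p2 p3 p4 p5 p6 p7 p8 : ZMod 2,
      p1+p2+p3+p4+p5+p6+p7+p8 = 0 → p1+p2+p7+p8 = (p3+p5+p7+p8)+(p4+p6+p7+p8))
      _ _ _ _ _ _ _ _ h
  have hBsymm : ∀ x y, Bf f x y = Bf f y x := by
    intro x y; unfold Bf; rw [add_comm x y]; ring
  have hB0 : ∀ x, Bf f x 0 = 0 := by
    intro x; unfold Bf; rw [add_zero]
    exact (by decide : ∀ p q : ZMod 2, p + p + q + q = 0) _ _
  have hBself : ∀ x, Bf f x x = 0 := by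
    intro x; unfold Bf; rw [hxx x]
    exact (by decide : ∀ p q : ZMod 2, p + q + q + p = 0) _ _
  have hBaddR : ∀ x y y', Bf f x (y + y') = Bf f x y + Bf f x y' := by
    intro x y y'
    rw [hBsymm, hBaddL, hBsymm, hBsymm y']
  have hstep : ∀ x s, Bf f x s = 0 → f (x + s) = f x + (f s + f 0) := by
    intro x s h
    have h' : f (x+s) + f x + f s + f 0 = 0 := h
    exact (by decide : ∀ p q r u : ZMod 2, p+q+r+u = 0 → p = q + (r + u)) _ _ _ _ h'
  intro r
  induction r with
  | zero =>
    intro U hU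
    refine ⟨⊥, 0, bot_le, U.zero_mem, ?_, ?_⟩
    · simp only [finrank_bot]; omega
    · intro w hw
      rw [Submodule.mem_bot] at hw
      rw [hw, add_zero]
  | succ r ih =>
    intro U hU
    by_cases hall : ∀ x ∈ U, ∀ y ∈ U, Bf f x y = 0
    · -- Case 1 : B vanishes on U, so f + f 0 is linear on U
      let g : U →ₗ[ZMod 2] ZMod 2 :=
      { toFun := fun x => f x + f 0
        map_add' := by
          intro x y
          have h : f ((x:Fin n → ZMod 2) + y) + f x + f y + f 0 = 0 :=
            hall x.1 x.2 y.1 y.2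
          simp only [Submodule.coe_add]
          exact (by decide : ∀ p q r u : ZMod 2, p+q+r+u = 0 → p+u = (q+u)+(r+u))
            _ _ _ _ h
        map_smul' := by
          intro c x
          rcases z2cases c with rfl | rfl
          · simp only [zero_smul, Submodule.coe_zero, RingHom.id_apply, smul_eq_mul,
              zero_mul]
            exact (by decide : ∀ q : ZMod 2, q + q = 0) (f 0)
          · simp only [one_smul, RingHom.id_apply, smul_eq_mul, one_mul] }
      refine ⟨(LinearMap.ker g).map U.subtype, 0, Submodule.map_subtype_le _ _,
        U.zero_mem, ?_, ?_⟩
      · have h1 := LinearMap.finrank_range_add_finrank_ker g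
        have h2 : Module.finrank (ZMod 2) (LinearMap.range g) ≤ 1 := by
          have := Submodule.finrank_le (LinearMap.range g)
          simpa [Module.finrank_self] using this
        rw [Submodule.finrank_map_subtype_eq]
        omega
      · rintro w hw
        rw [Submodule.mem_map] at hw
        obtain ⟨u, hu, rfl⟩ := hw
        rw [LinearMap.mem_ker] at hu
        have hu' : f u + f 0 = 0 := hu
        rw [zero_add]
        exact (by decide : ∀ p q : ZMod 2, p + q = 0 → p = q) _ _ hu'
    · -- Case 2
      push_neg at hall
      obtain ⟨a, haU, b, hbU, hab⟩ := hall
      have hab1 : Bf f a b = 1 := by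
        rcases z2cases (Bf f a b) with h | h
        · exact absurd h hab
        · exact h
      let φ : U →ₗ[ZMod 2] ZMod 2 × ZMod 2 :=
      { toFun := fun x => (Bf f a x, Bf f b x)
        map_add' := by
          intro x y
          simp only [Submodule.coe_add, hBaddR, Prod.mk_add_mk]
        map_smul' := by
          intro c x
          rcases z2cases c with rfl | rfl
          · simp only [zero_smul, Submodule.coe_zero, RingHom.id_apply, hB0]
            rfl
          · simp only [one_smul, RingHom.id_apply] }
      set U' : Submodule (ZMod 2) (Fin n → ZMod 2) := (LinearMap.ker φ).map U.subtype
        with hU'def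
      have hU'le : U' ≤ U := Submodule.map_subtype_le _ _
      have hmem : ∀ x, x ∈ U' ↔ x ∈ U ∧ Bf f a x = 0 ∧ Bf f b x = 0 := by
        intro x
        rw [hU'def, Submodule.mem_map]
        constructor
        · rintro ⟨⟨y, hy⟩, hk, rfl⟩
          rw [LinearMap.mem_ker] at hk
          have h1 : Bf f a y = 0 := congrArg Prod.fst hk
          have h2 : Bf f b y = 0 := congrArg Prod.snd hk
          exact ⟨hy, h1, h2⟩
        · rintro ⟨hx, h1, h2⟩
          exact ⟨⟨x, hx⟩, LinearMap.mem_ker.mpr (Prod.ext h1 h2), rfl⟩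
      have hanot : a ∉ U' := by
        intro h
        have h1 := ((hmem a).mp h).2.2
        rw [hBsymm, hab1] at h1
        exact one_ne_zero h1
      have hbnot : b ∉ U' := by
        intro h
        have h1 := ((hmem b).mp h).2.1
        rw [hab1] at h1
        exact one_ne_zero h1
      have habnot : a + b ∉ U' := by
        intro h
        have h1 := ((hmem (a+b)).mp h).2.1
        rw [hBaddR, hBself, hab1] at h1
        exact absurd h1 (by decide)
      -- rank bookkeeping
      have hrank2 : Module.finrank (ZMod 2) U ≤ Module.finrank (ZMod 2) U' + 2 := by
        have h1 := LinearMap.finrank_range_add_finrank_ker φ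
        have h2 : Module.finrank (ZMod 2) (LinearMap.range φ) ≤ 2 := by
          have h3 := Submodule.finrank_le (LinearMap.range φ)
          have h4 : Module.finrank (ZMod 2) (ZMod 2 × ZMod 2) = 2 := by
            rw [Module.finrank_prod, Module.finrank_self]
          omega
        have h5 : Module.finrank (ZMod 2) U' = Module.finrank (ZMod 2) (LinearMap.ker φ) :=
          Submodule.finrank_map_subtype_eq _ _
        omega
      have hU'r : Module.finrank (ZMod 2) U' ≤ r := by
        have hlt : U' < U := lt_of_le_of_ne hU'le (fun h => hanot (h ▸ haU))
        have := Submodule.finrank_lt_finrank_of_lt hlt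
        omega
      obtain ⟨W, v, hWU', hvU', hWrk, hconst⟩ := ih U' hU'r
      -- the translation-increment facts
      have hU'B : ∀ x ∈ U', Bf f x a = 0 ∧ Bf f x b = 0 ∧ Bf f x (a+b) = 0 := by
        intro x hx
        obtain ⟨-, h1, h2⟩ := (hmem x).mp hx
        refine ⟨(hBsymm x a).trans h1, (hBsymm x b).trans h2, ?_⟩
        rw [hBaddR, (hBsymm x a).trans h1, (hBsymm x b).trans h2, add_zero]
      -- generic finisher
      have finisher : ∀ s t : Fin n → ZMod 2, s ∈ U → t ∈ U → s ∉ U' →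
          (∀ x ∈ U', Bf f x t = 0) → (∀ x ∈ U', Bf f x (t + s) = 0) →
          f t + f (t + s) = 0 →
          ∃ (W : Submodule (ZMod 2) (Fin n → ZMod 2)) (v : Fin n → ZMod 2),
            W ≤ U ∧ v ∈ U ∧
            Module.finrank (ZMod 2) U / 2 ≤ Module.finrank (ZMod 2) W ∧
            ∀ w ∈ W, f (v + w) = f v := by
        intro s t hsU htU hsnot hBt hBts heq
        refine ⟨W ⊔ Submodule.span (ZMod 2) {s}, v + t, ?_, ?_, ?_, ?_⟩
        · exact sup_le (hWU'.trans hU'le)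
            ((Submodule.span_singleton_le_iff_mem s U).mpr hsU)
        · exact U.add_mem (hU'le hvU') htU
        · have hsW : s ∉ W := fun h => hsnot (hWU' h)
          have hlt2 : W < W ⊔ Submodule.span (ZMod 2) {s} := by
            refine lt_of_le_of_ne le_sup_left (fun h => hsW ?_)
            rw [h]
            exact Submodule.mem_sup_right (Submodule.mem_span_singleton_self s)
          have h3 := Submodule.finrank_lt_finrank_of_lt hlt2
          omega
        · rintro w' hw'
          rw [Submodule.mem_sup] at hw'
          obtain ⟨w, hw, z, hz, rfl⟩ := hw'
          rw [Submodule.mem_span_singleton] at hz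
          obtain ⟨c, rfl⟩ := hz
          have hvw : (v + w) ∈ U' := U'.add_mem hvU' (hWU' hw)
          have hfvw : f (v + w) = f v := hconst w hw
          have e0 : f (v + t) = f v + (f t + f 0) := hstep v t (hBt v hvU')
          rcases z2cases c with rfl | rfl
          · have he : v + t + (w + (0:ZMod 2) • s) = (v + w) + t := by
              rw [zero_smul, add_zero]; abel
            rw [he, hstep (v+w) t (hBt _ hvw), hfvw, e0]
          · have he : v + t + (w + (1:ZMod 2) • s) = (v + w) + (t + s) := by
              rw [one_smul]; abel
            rw [he, hstep (v+w) (t+s) (hBts _ hvw), hfvw, e0]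
            exact (by decide : ∀ p q u v0 : ZMod 2, q + u = 0 → p + (u + v0) = p + (q + v0))
              _ _ _ _ heq
      -- now choose s and t
      have hγ : (f a + f 0) + ((f b + f 0) + (f (a+b) + f 0)) = 1 := by
        have h : f (a+b) + f a + f b + f 0 = 1 := hab1
        exact (by decide : ∀ p q u v0 : ZMod 2, p + q + u + v0 = 1 →
          (q + v0) + ((u + v0) + (p + v0)) = 1) _ _ _ _ h
      have hBt0 : ∀ x ∈ U', Bf f x 0 = 0 := fun x _ => hB0 x
      by_cases hga : f a + f 0 = 0
      · refine finisher a 0 haU U.zero_mem hanot hBt0 ?_ ?_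
        · intro x hx; rw [zero_add]; exact (hU'B x hx).1
        · rw [zero_add]
          exact (by decide : ∀ p q : ZMod 2, p + q = 0 → q + p = 0) _ _ hga
      by_cases hgb : f b + f 0 = 0
      · refine finisher b 0 hbU U.zero_mem hbnot hBt0 ?_ ?_
        · intro x hx; rw [zero_add]; exact (hU'B x hx).2.1
        · rw [zero_add]
          exact (by decide : ∀ p q : ZMod 2, p + q = 0 → q + p = 0) _ _ hgb
      by_cases hgab : f (a+b) + f 0 = 0
      · refine finisher (a+b) 0 (U.add_mem haU hbU) U.zero_mem habnot hBt0 ?_ ?_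
        · intro x hx; rw [zero_add]; exact (hU'B x hx).2.2
        · rw [zero_add]
          exact (by decide : ∀ p q : ZMod 2, p + q = 0 → q + p = 0) _ _ hgab
      · -- all increments are 1 : use t = a, s = b
        refine finisher b a hbU haU hbnot (fun x hx => (hU'B x hx).1)
          (fun x hx => (hU'B x hx).2.2) ?_
        have h1 : f a + f 0 = 1 := by
          rcases z2cases (f a + f 0) with h | h
          · exact absurd h hga
          · exact h
        have h2 : f (a+b) + f 0 = 1 := by
          rcases z2cases (f (a+b) + f 0) with h | h
          · exact absurd h hgab
          · exact h
        exact (by decide : ∀ p q u : ZMod 2, p + u = 1 → q + u = 1 → p + q = 0)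
          _ _ _ h1 h2

/-- a Boolean function of algebraic degree at most 2 is constant on some
affine subspace of dimension at least `⌊n/2⌋`. -/
theorem stmt9 {n : ℕ} (f : (Fin n → ZMod 2) → ZMod 2) (M : Finset (Finset (Fin n)))
    (hM : IsANF f M) (hdeg : ∀ S ∈ M, S.card ≤ 2) :
    ∃ (W : Submodule (ZMod 2) (Fin n → ZMod 2)) (v : Fin n → ZMod 2) (u : ZMod 2),
      n / 2 ≤ Module.finrank (ZMod 2) W ∧ ∀ w ∈ W, f (v + w) = u := by
  obtain ⟨W, v, -, -, hrk, hconst⟩ :=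
    quadratic_constant f (quad_of_anf f M hM hdeg)
      (Module.finrank (ZMod 2) (⊤ : Submodule (ZMod 2) (Fin n → ZMod 2))) ⊤ le_rfl
  refine ⟨W, v, f v, ?_, hconst⟩
  have h : Module.finrank (ZMod 2) (⊤ : Submodule (ZMod 2) (Fin n → ZMod 2)) = n := by
    rw [finrank_top, Module.finrank_fin_fun]
  omega
end
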